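/- arXiv:math/0503623 — 6 statements merged into one kernel-verified Lean document; each statement's English description precedes it below -/
import Mathlib

section
/- Let G be a graph with no even cycle of length at most 2k, and let u, v be vertices joined by a path of length at most k. If P* is a uv-geodesic, then P* is the unique shortest uv-path. -/
open SimpleGraph Walk

private lemma getVert_ne_aux {V : Type*} {G : SimpleGraph V} :
    ∀ {u v : V} (W : G.Walk u v), W.IsPath → ∀ i j, i < j → j ≤ W.length →
      W.getVert i ≠ W.getVert j := by
  intro u v W
  induction W with
  | nil =>
    intro _ i j hij hj
    simp only [Walk.length_nil] at hj
    omega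
  | cons h p ih =>
    intro hW i j hij hj
    rcases j with _ | j
    · omega
    rcases i with _ | i
    · simp only [Walk.getVert_zero, Walk.getVert_cons_succ]
      intro he
      have hmem : p.getVert j ∈ p.support :=
        Walk.mem_support_iff_exists_getVert.mpr ⟨j, rfl, by
          simpa [Walk.length_cons, Nat.succ_le_succ_iff] using hj⟩
      exact ((Walk.cons_isPath_iff _ _).mp hW).2 (he ▸ hmem)
    · simp only [Walk.getVert_cons_succ]
      exact ih hW.of_cons i j (by omega) (by simp only [Walk.length_cons] at hj; omega)

private lemma length_takeUntil_eq_aux {V : Type*} {G : SimpleGraph V} [DecidableEq V]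
    {u v y : V} (W : G.Walk u v) (hW : W.IsPath) (hy : y ∈ W.support) {n : ℕ}
    (hn : W.getVert n = y) (hnl : n ≤ W.length) : (W.takeUntil y hy).length = n := by
  have h1 : W.getVert (W.takeUntil y hy).length = y := by
    have h1' : ((W.takeUntil y hy).append (W.dropUntil y hy)).getVert
        (W.takeUntil y hy).length = y := by
      rw [Walk.getVert_append]
      simp
    rwa [Walk.take_spec] at h1'
  have h2 := Walk.length_takeUntil_le W hy
  by_contra hne
  rcases Nat.lt_or_ge (W.takeUntil y hy).length n with hlt | hge
  · exact getVert_ne_aux W hW _ _ hlt hnl (h1.trans hn.symm)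
  · exact getVert_ne_aux W hW n _ (lt_of_le_of_ne hge (Ne.symm hne)) h2 (hn.trans h1.symm)

private lemma geodesic_unique_aux {V : Type*} (G : SimpleGraph V) (k : ℕ)
    (hcyc : ∀ (x : V) (c : G.Walk x x), c.IsCycle → Even c.length → ¬ c.length ≤ 2 * k)
    (v : V) : ∀ (d : ℕ), d ≤ k → ∀ (u : V) (P Q : G.Walk u v), P.IsPath → Q.IsPath →
    P.length = d → Q.length = d →
    (∀ r : G.Walk u v, P.length ≤ r.length) → (∀ r : G.Walk u v, Q.length ≤ r.length) →
    P = Q := by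
  classical
  intro d
  induction d using Nat.strong_induction_on with
  | _ d IH =>
  intro hdk u P Q hP hQ hPl hQl hPmin hQmin
  cases P with
  | nil =>
    simp only [Walk.length_nil] at hPl
    have : Q.length = 0 := by omega
    exact (Walk.nil_iff_eq_nil.mp (Walk.length_eq_zero_iff.mp this)).symm
  | @cons _ w₁ _ h₁ p =>
    cases Q with
    | nil =>
      exfalso
      simp only [Walk.length_cons] at hPl
      simp only [Walk.length_nil] at hQl
      omega
    | @cons _ w₂ _ h₂ q =>
      by_cases hw : w₁ = w₂
      · subst hw
        have hp : p.IsPath := hP.of_cons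
        have hq : q.IsPath := hQ.of_cons
        simp only [Walk.length_cons] at hPl hQl
        have hd1 : 1 ≤ d := by omega
        have hpmin : ∀ r : G.Walk w₁ v, p.length ≤ r.length := fun r => by
          have := hPmin (Walk.cons h₁ r)
          simpa [Walk.length_cons] using this
        have hqmin : ∀ r : G.Walk w₁ v, q.length ≤ r.length := fun r => by
          have := hQmin (Walk.cons h₂ r)
          simpa [Walk.length_cons] using this
        have := IH (d - 1) (by omega) (by omega) w₁ p q hp hq (by omega) (by omega)
          hpmin hqmin
        rw [this]
      · exfalso
        have hdlen : p.length + 1 = d := by simpa using hPl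
        have hex : ∃ n, (Walk.cons h₁ p).getVert (n + 1) ∈ (Walk.cons h₂ q).support := by
          refine ⟨p.length, ?_⟩
          have hv : (Walk.cons h₁ p).getVert (p.length + 1) = v := by
            have := (Walk.cons h₁ p).getVert_length
            simpa [Walk.length_cons] using this
          rw [hv]
          exact Walk.end_mem_support _
        set N := Nat.find hex with hN
        set y := (Walk.cons h₁ p).getVert (N + 1) with hy
        have hyQ : y ∈ (Walk.cons h₂ q).support := Nat.find_spec hex
        have hNle : N + 1 ≤ (Walk.cons h₁ p).length := by
          have := Nat.find_min' hex (by
            have hv : (Walk.cons h₁ p).getVert (p.length + 1) = v := by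
              have := (Walk.cons h₁ p).getVert_length
              simpa [Walk.length_cons] using this
            rw [hv]; exact Walk.end_mem_support _)
          simp only [Walk.length_cons]
          omega
        have hyP : y ∈ (Walk.cons h₁ p).support :=
          Walk.mem_support_iff_exists_getVert.mpr ⟨N + 1, rfl, hNle⟩
        set A := (Walk.cons h₁ p).takeUntil y hyP with hA
        set B := (Walk.cons h₂ q).takeUntil y hyQ with hB
        set D := (Walk.cons h₁ p).dropUntil y hyP with hD
        set D' := (Walk.cons h₂ q).dropUntil y hyQ with hD'
        have hAlen : A.length = N + 1 := length_takeUntil_eq_aux _ hP hyP hy.symm hNle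
        have hspecP : A.append D = Walk.cons h₁ p := Walk.take_spec _ hyP
        have hspecQ : B.append D' = Walk.cons h₂ q := Walk.take_spec _ hyQ
        have hlenP : A.length + D.length = d := by
          have := congrArg Walk.length hspecP
          rw [Walk.length_append] at this
          omega
        have hlenQ : B.length + D'.length = d := by
          have := congrArg Walk.length hspecQ
          rw [Walk.length_append] at this
          omega
        have h1 : d ≤ B.length + D.length := by
          have := hPmin (B.append D)
          rw [Walk.length_append] at this
          omega
        have h2 : d ≤ A.length + D'.length := by
          have := hQmin (A.append D')
          rw [Walk.length_append] at this
          omega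
        have hAB : A.length = B.length := by omega
        set m := A.length with hm
        -- m ≥ 2
        have hm2 : 2 ≤ m := by
          rcases Nat.lt_or_ge m 2 with hlt | hge
          · exfalso
            have hm1 : m = 1 := by omega
            have hN0 : N = 0 := by omega
            have hyw₁ : y = w₁ := by
              rw [hy, hN0]
              simp [Walk.getVert_cons_succ, Walk.getVert_zero]
            have hQy : (Walk.cons h₂ q).getVert 1 = y := by
              conv_lhs => rw [← hspecQ]
              rw [Walk.getVert_append]
              have : ¬ (1 < B.length) := by omega
              simp [this, show (1 : ℕ) - B.length = 0 by omega]
            have hQw₂ : (Walk.cons h₂ q).getVert 1 = w₂ := by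
              simp [Walk.getVert_cons_succ, Walk.getVert_zero]
            exact hw (by rw [← hyw₁, ← hQy, hQw₂])
          · exact hge
        -- u and y are not adjacent
        have hNadj : ¬ G.Adj u y := by
          intro ha
          have := hPmin (Walk.cons ha D)
          simp only [Walk.length_cons] at this
          omega
        -- internal vertices of A are not on Q
        have hint : ∀ z, z ∈ A.support → z ≠ u → z ≠ y → z ∉ (Walk.cons h₂ q).support := by
          intro z hz hzu hzy hzQ
          obtain ⟨i, hiz, hil⟩ := Walk.mem_support_iff_exists_getVert.mp hz
          have hilt : i < m := by
            rcases Nat.lt_or_ge i m with h | h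
            · exact h
            · exfalso
              have : i = m := by omega
              apply hzy
              rw [← hiz, this, hm]
              exact A.getVert_length
          have hiP : (Walk.cons h₁ p).getVert i = z := by
            conv_lhs => rw [← hspecP]
            rw [Walk.getVert_append]
            simp [hilt, hiz]
            intro h; omega
          have hi0 : i ≠ 0 := by
            intro h
            apply hzu
            rw [← hiz, h, Walk.getVert_zero]
          obtain ⟨j, rfl⟩ := Nat.exists_eq_succ_of_ne_zero hi0
          have hjN : j < N := by omega
          exact Nat.find_min hex hjN (by rw [hiP]; exact hzQ)
        have hApath : A.IsPath := hP.takeUntil hyP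
        have hBpath : B.IsPath := hQ.takeUntil hyQ
        set c := A.append B.reverse with hc
        have hclen : c.length = 2 * m := by
          rw [hc, Walk.length_append, Walk.length_reverse]
          omega
        -- facts about A.support.tail
        have hAtail : A.support.tail.Nodup ∧ u ∉ A.support.tail := by
          have := hApath.support_nodup
          rw [Walk.support_eq_cons] at this
          exact ⟨(List.nodup_cons.mp this).2, (List.nodup_cons.mp this).1⟩
        have hBrevtail : B.reverse.support.tail.Nodup ∧ y ∉ B.reverse.support.tail := by
          have := hBpath.reverse.support_nodup
          rw [Walk.support_eq_cons] at this
          exact ⟨(List.nodup_cons.mp this).2, (List.nodup_cons.mp this).1⟩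
        have hccyc : c.IsCycle := by
          refine ⟨⟨⟨?_⟩, ?_⟩, ?_⟩
          · -- edges nodup
            rw [hc, Walk.edges_append, Walk.edges_reverse]
            refine List.Nodup.append hApath.isTrail.edges_nodup
              (List.nodup_reverse.mpr hBpath.isTrail.edges_nodup) ?_
            intro e heA heB
            rw [List.mem_reverse] at heB
            revert heA heB
            induction e using Sym2.ind with
            | _ a b =>
              intro heA heB
              have haA : a ∈ A.support := A.fst_mem_support_of_mem_edges heA
              have hbA : b ∈ A.support := A.snd_mem_support_of_mem_edges heA
              have haQ : a ∈ (Walk.cons h₂ q).support :=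
                Walk.support_takeUntil_subset _ hyQ (B.fst_mem_support_of_mem_edges heB)
              have hbQ : b ∈ (Walk.cons h₂ q).support :=
                Walk.support_takeUntil_subset _ hyQ (B.snd_mem_support_of_mem_edges heB)
              have hadj : G.Adj a b := A.adj_of_mem_edges heA
              have ha : a = u ∨ a = y := by
                by_contra hcon
                push_neg at hcon
                exact hint a haA hcon.1 hcon.2 haQ
              have hb : b = u ∨ b = y := by
                by_contra hcon
                push_neg at hcon
                exact hint b hbA hcon.1 hcon.2 hbQ
              rcases ha with rfl | rfl <;> rcases hb with rfl | rfl
              · exact hadj.ne rfl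
              · exact hNadj hadj
              · exact hNadj hadj.symm
              · exact hadj.ne rfl
          · -- not nil
            intro h
            have : c.length = 0 := by rw [h]; rfl
            omega
          · -- support tail nodup
            have hsup : c.support.tail = A.support.tail ++ B.reverse.support.tail := by
              rw [hc, Walk.support_append, Walk.support_eq_cons A]
              rfl
            rw [hsup]
            refine List.Nodup.append hAtail.1
              (List.Sublist.nodup (List.tail_sublist _) hBpath.reverse.support_nodup) ?_
            intro z hzA hzB
            have hzu : z ≠ u := fun h => hAtail.2 (h ▸ hzA)
            have hzy : z ≠ y := fun h => hBrevtail.2 (h ▸ hzB)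
            have hzAs : z ∈ A.support := List.mem_of_mem_tail hzA
            have hzQs : z ∈ (Walk.cons h₂ q).support := by
              apply Walk.support_takeUntil_subset _ hyQ
              have : z ∈ B.reverse.support := List.mem_of_mem_tail hzB
              rwa [Walk.support_reverse, List.mem_reverse] at this
            exact hint z hzAs hzu hzy hzQs
        refine hcyc u c hccyc ?_ ?_
        · rw [hclen]; exact even_two_mul m
        · rw [hclen]; omega

/-- In a graph with no even cycle of length at most `2k`, if `u, v` are joined by a path of
length at most `k`, then the `uv`-geodesic is unique: any two shortest `uv`-paths coincide. -/
theorem geodesic_unique {V : Type*} (G : SimpleGraph V) (k : ℕ) (hk : 2 ≤ k)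
    (hcyc : ∀ (x : V) (c : G.Walk x x), c.IsCycle → Even c.length → ¬ c.length ≤ 2 * k)
    (u v : V) (hdist : ∃ p : G.Walk u v, p.IsPath ∧ p.length ≤ k)
    (P : G.Walk u v) (hP : P.IsPath) (hPgeo : ∀ q : G.Walk u v, q.IsPath → P.length ≤ q.length)
    (Q : G.Walk u v) (hQ : Q.IsPath) (hQgeo : ∀ q : G.Walk u v, q.IsPath → Q.length ≤ q.length) :
    P = Q := by
  classical
  obtain ⟨p0, hp0, hp0k⟩ := hdist
  have hPmin : ∀ r : G.Walk u v, P.length ≤ r.length := fun r =>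
    le_trans (hPgeo r.bypass r.bypass_isPath) r.length_bypass_le
  have hQmin : ∀ r : G.Walk u v, Q.length ≤ r.length := fun r =>
    le_trans (hQgeo r.bypass r.bypass_isPath) r.length_bypass_le
  have hlen : Q.length = P.length := le_antisymm (hQgeo P hP) (hPgeo Q hQ)
  exact geodesic_unique_aux G k hcyc v P.length (le_trans (hPgeo p0 hp0) hp0k)
    u P Q hP hQ rfl hlen hPmin hQmin
end

section
/- Let G be a graph with no even cycle of length at most 2k and u, v distinct vertices. Then the number of uv-paths of length exactly k is less than 2^k. -/
open Classical

namespace EvenCyclePaths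

variable {V : Type*} {G : SimpleGraph V}

/-- getVert is injective on `[0, length]` for a path. -/
lemma getVert_inj {u v : V} {p : G.Walk u v} (hp : p.IsPath) :
    ∀ {i j : ℕ}, i ≤ p.length → j ≤ p.length → p.getVert i = p.getVert j → i = j := by
  induction p with
  | nil => intro i j hi hj _; simp at hi hj; omega
  | @cons a b c h q ih =>
    intro i j hi hj hij
    rw [SimpleGraph.Walk.cons_isPath_iff] at hp
    match i, j with
    | 0, 0 => rfl
    | 0, (j+1) =>
      exfalso
      rw [SimpleGraph.Walk.getVert_zero, SimpleGraph.Walk.getVert_cons_succ] at hij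
      exact hp.2 (SimpleGraph.Walk.mem_support_iff_exists_getVert.mpr
        ⟨j, hij.symm, by simpa using hj⟩)
    | (i+1), 0 =>
      exfalso
      rw [SimpleGraph.Walk.getVert_zero, SimpleGraph.Walk.getVert_cons_succ] at hij
      exact hp.2 (SimpleGraph.Walk.mem_support_iff_exists_getVert.mpr
        ⟨i, hij, by simpa using hi⟩)
    | (i+1), (j+1) =>
      rw [SimpleGraph.Walk.getVert_cons_succ, SimpleGraph.Walk.getVert_cons_succ] at hij
      have := ih hp.1 (by simpa using hi) (by simpa using hj) hij
      omega

/-- Build a walk from a function with consecutive adjacency. -/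
lemma exists_walk_fn : ∀ (n : ℕ) (f : ℕ → V), (∀ i < n, G.Adj (f i) (f (i+1))) →
    ∃ w : G.Walk (f 0) (f n), w.length = n ∧ w.support = (List.range (n+1)).map f ∧
      w.edges = (List.range n).map (fun i => s(f i, f (i+1))) := by
  intro n
  induction n with
  | zero => intro f _; exact ⟨SimpleGraph.Walk.nil, by simp, by simp [List.range_succ], by simp⟩
  | succ m ih =>
    intro f hadj
    obtain ⟨w', hl, hs, he⟩ := ih (fun i => f (i+1)) (fun i hi => hadj (i+1) (by omega))
    refine ⟨SimpleGraph.Walk.cons (hadj 0 (by omega)) w', by simp [hl], ?_, ?_⟩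
    · rw [SimpleGraph.Walk.support_cons, hs]
      simp [List.range_succ_eq_map, List.map_map, Function.comp_def]
    · rw [SimpleGraph.Walk.edges_cons, he]
      simp [List.range_succ_eq_map, List.map_map, Function.comp_def]

/-- Build a cycle from a cyclic function with distinct values. -/
lemma exists_cycle_fn (n : ℕ) (f : ℕ → V) (h3 : 3 ≤ n)
    (hadj : ∀ i < n, G.Adj (f i) (f (i+1))) (hcl : f n = f 0)
    (hinj : ∀ i < n, ∀ j < n, f i = f j → i = j) :
    ∃ c : G.Walk (f 0) (f 0), c.IsCycle ∧ c.length = n := by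
  obtain ⟨w, hl, hs, he⟩ := exists_walk_fn n f hadj
  refine ⟨w.copy rfl hcl, ?_, by simpa using hl⟩
  rw [SimpleGraph.Walk.isCycle_def]
  refine ⟨⟨?_⟩, ?_, ?_⟩
  · -- edges nodup
    rw [SimpleGraph.Walk.edges_copy, he]
    rw [List.nodup_map_iff_inj_on List.nodup_range]
    intro i hi j hj hij
    rw [List.mem_range] at hi hj
    rw [Sym2.eq_iff] at hij
    rcases hij with ⟨h1, h2⟩ | ⟨h1, h2⟩
    · exact hinj i hi j hj h1
    · by_cases hj1 : j + 1 = n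
      · have : f i = f 0 := by rw [h1, hj1, hcl]
        have hi0 : i = 0 := hinj i hi 0 (by omega) this
        subst hi0
        have : (1:ℕ) = j := hinj 1 (by omega) j hj h2
        omega
      · have hij1 : i = j + 1 := hinj i hi (j+1) (by omega) h1
        by_cases hi1 : i + 1 = n
        · have : f 0 = f j := by rw [← hcl, ← hi1, h2]
          have : (0:ℕ) = j := hinj 0 (by omega) j hj this
          omega
        · have : i + 1 = j := hinj (i+1) (by omega) j hj h2
          omega
  · intro hnil
    have : (w.copy rfl hcl).length = 0 := by rw [hnil]; simp
    rw [SimpleGraph.Walk.length_copy] at this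
    omega
  · rw [SimpleGraph.Walk.support_copy, hs, List.range_succ_eq_map]
    simp only [List.map_cons, List.tail_cons, List.map_map]
    rw [List.nodup_map_iff_inj_on List.nodup_range]
    intro i hi j hj hij
    rw [List.mem_range] at hi hj
    simp only [Function.comp_apply, Nat.succ_eq_add_one] at hij
    by_cases hi1 : i + 1 = n
    · by_cases hj1 : j + 1 = n
      · omega
      · exfalso
        have : f (j+1) = f 0 := by rw [← hij, hi1, hcl]
        have := hinj (j+1) (by omega) 0 (by omega) this
        omega
    · by_cases hj1 : j + 1 = n
      · exfalso
        have : f (i+1) = f 0 := by rw [hij, hj1, hcl]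
        have := hinj (i+1) (by omega) 0 (by omega) this
        omega
      · have := hinj (i+1) (by omega) (j+1) (by omega) hij
        omega


variable {k : ℕ}

/-- If two internally disjoint "arms" (vertex sequences) join the same pair of
vertices and their total length is even and at most `2k`, we contradict `hcyc`. -/
lemma two_arms_false
    (hcyc : ∀ (x : V) (c : G.Walk x x), c.IsCycle → Even c.length → ¬ c.length ≤ 2 * k)
    (g h : ℕ → V) (a b : ℕ) (ha : 1 ≤ a) (hb : 1 ≤ b)
    (hne2 : ¬(a = 1 ∧ b = 1))
    (h0 : g 0 = h 0) (hend : g a = h b)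
    (hgadj : ∀ i < a, G.Adj (g i) (g (i+1)))
    (hhadj : ∀ i < b, G.Adj (h i) (h (i+1)))
    (hginj : ∀ i ≤ a, ∀ j ≤ a, g i = g j → i = j)
    (hhinj : ∀ i ≤ b, ∀ j ≤ b, h i = h j → i = j)
    (hdisj : ∀ i, 1 ≤ i → i ≤ a → ∀ l, 1 ≤ l → l ≤ b → g i = h l → i = a ∧ l = b)
    (heven : Even (a + b)) (hle : a + b ≤ 2 * k) : False := by
  set n := a + b with hn
  have h3 : 3 ≤ n := by
    rcases Nat.even_iff.mp heven with h2
    omega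
  set f : ℕ → V := fun i => if i ≤ a then g i else h (n - i) with hf
  have hfa : ∀ i, i ≤ a → f i = g i := by intro i hi; simp [hf, hi]
  have hfb : ∀ i, a < i → i ≤ n → f i = h (n - i) := by
    intro i hi1 hi2; simp [hf, Nat.not_le.mpr hi1]
  have hcl : f n = f 0 := by
    rw [hfa 0 (by omega), hfb n (by omega) (le_refl _)]
    simp [h0.symm]
  have hadjf : ∀ i < n, G.Adj (f i) (f (i+1)) := by
    intro i hi
    by_cases hia : i + 1 ≤ a
    · rw [hfa i (by omega), hfa (i+1) hia]
      exact hgadj i (by omega)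
    · by_cases hia2 : i ≤ a
      · -- i = a
        have hie : i = a := by omega
        rw [hfa i hia2, hfb (i+1) (by omega) (by omega), hie]
        have : n - (a + 1) = b - 1 := by omega
        rw [this, hend]
        have := hhadj (b-1) (by omega)
        rw [show b - 1 + 1 = b by omega] at this
        exact this.symm
      · rw [hfb i (by omega) (by omega), hfb (i+1) (by omega) (by omega)]
        have := hhadj (n - (i+1)) (by omega)
        rw [show n - (i+1) + 1 = n - i by omega] at this
        exact this.symm
  have hinjf : ∀ i < n, ∀ j < n, f i = f j → i = j := by
    intro i hi j hj hij
    by_cases hia : i ≤ a <;> by_cases hja : j ≤ a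
    · rw [hfa i hia, hfa j hja] at hij; exact hginj i hia j hja hij
    · rw [hfa i hia, hfb j (by omega) (by omega)] at hij
      rcases Nat.eq_zero_or_pos i with hi0 | hi0
      · subst hi0
        rw [h0] at hij
        have := hhinj 0 (by omega) (n-j) (by omega) hij
        omega
      · have := hdisj i hi0 hia (n-j) (by omega) (by omega) hij
        omega
    · rw [hfb i (by omega) (by omega), hfa j hja] at hij
      rcases Nat.eq_zero_or_pos j with hj0 | hj0
      · subst hj0
        rw [h0] at hij
        have := hhinj (n-i) (by omega) 0 (by omega) hij
        omega
      · have := hdisj j hj0 hja (n-i) (by omega) (by omega) hij.symm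
        omega
    · rw [hfb i (by omega) (by omega), hfb j (by omega) (by omega)] at hij
      have := hhinj (n-i) (by omega) (n-j) (by omega) hij
      omega
  obtain ⟨c, hc, hcl⟩ := exists_cycle_fn n f h3 hadjf hcl hinjf
  exact hcyc _ c hc (by rw [hcl]; exact heven) (by omega)

/-- A minimal-sum meeting point of two walks from `u` to `v`. -/
lemma min_meet {u v : V} (X Y : G.Walk u v) (hX1 : 1 ≤ X.length) (hY1 : 1 ≤ Y.length) :
    ∃ s t, 1 ≤ s ∧ s ≤ X.length ∧ 1 ≤ t ∧ t ≤ Y.length ∧ X.getVert s = Y.getVert t ∧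
      ∀ i l, 1 ≤ i → i ≤ X.length → 1 ≤ l → l ≤ Y.length →
        X.getVert i = Y.getVert l → s + t ≤ i + l := by
  set M : Set ℕ := {m | ∃ i l, 1 ≤ i ∧ i ≤ X.length ∧ 1 ≤ l ∧ l ≤ Y.length ∧
    X.getVert i = Y.getVert l ∧ i + l = m} with hM
  have hne : M.Nonempty := by
    refine ⟨X.length + Y.length, X.length, Y.length, hX1, le_refl _, hY1, le_refl _, ?_, rfl⟩
    rw [SimpleGraph.Walk.getVert_length, SimpleGraph.Walk.getVert_length]
  obtain ⟨s, t, hs1, hs2, ht1, ht2, hst, hsum⟩ := Nat.sInf_mem hne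
  refine ⟨s, t, hs1, hs2, ht1, ht2, hst, ?_⟩
  intro i l hi1 hi2 hl1 hl2 hil
  rw [hsum]
  exact Nat.sInf_le ⟨i, l, hi1, hi2, hl1, hl2, hil, rfl⟩


/-- Properties of a composite arm: go along `W1` up to index `t`, then backwards
along `W2` from index `s` down to index `e`.  -/
lemma comp_arm {u v : V} (W1 W2 : G.Walk u v) (hW1 : W1.IsPath) (hW2 : W2.IsPath)
    (t s e : ℕ) (ht1 : 1 ≤ t) (ht2 : t ≤ W1.length) (he1 : 1 ≤ e) (hes : e ≤ s)
    (hs2 : s ≤ W2.length)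
    (hmeet : W2.getVert s = W1.getVert t)
    (hcross : ∀ i l, 1 ≤ i → i ≤ W2.length → 1 ≤ l → l ≤ W1.length →
      W2.getVert i = W1.getVert l → s + t ≤ i + l)
    (harm : ℕ → V)
    (hdef : ∀ l, harm l = if l ≤ t then W1.getVert l else W2.getVert (t + s - l)) :
    harm 0 = u ∧ harm (t + (s - e)) = W2.getVert e ∧
    (∀ l < t + (s - e), G.Adj (harm l) (harm (l+1))) ∧
    (∀ i ≤ t + (s - e), ∀ j ≤ t + (s - e), harm i = harm j → i = j) ∧
    (∀ l, 1 ≤ l → l ≤ t + (s - e) →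
      (l ≤ t ∧ harm l = W1.getVert l) ∨
      (∃ idx, e ≤ idx ∧ idx < s ∧ idx = t + s - l ∧ harm l = W2.getVert idx)) := by
  set d := t + (s - e) with hd
  have hval1 : ∀ l, l ≤ t → harm l = W1.getVert l := by
    intro l hl; rw [hdef]; simp [hl]
  have hval2 : ∀ l, t ≤ l → l ≤ d → harm l = W2.getVert (t + s - l) := by
    intro l hl1 hl2
    rcases Nat.eq_or_lt_of_le hl1 with h | h
    · subst h
      rw [hval1 t le_rfl, show t + s - t = s by omega]
      exact hmeet.symm
    · rw [hdef]; simp [Nat.not_le.mpr h]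
  refine ⟨?_, ?_, ?_, ?_, ?_⟩
  · rw [hval1 0 (by omega)]; exact W1.getVert_zero
  · rw [hval2 d (by omega) le_rfl]
    congr 1
    omega
  · intro l hl
    by_cases hl1 : l + 1 ≤ t
    · rw [hval1 l (by omega), hval1 (l+1) hl1]
      exact W1.adj_getVert_succ (by omega)
    · by_cases hl2 : l ≤ t
      · have hlt : l = t := by omega
        rw [hval1 l (by omega), hlt, ← hmeet, hval2 (t+1) (by omega) (by omega)]
        have hse : e < s := by omega
        have h' := W2.adj_getVert_succ (i := s - 1) (by omega)
        rw [show s - 1 + 1 = s by omega] at h'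
        rw [show t + s - (t+1) = s - 1 by omega]
        exact h'.symm
      · rw [hval2 l (by omega) (by omega), hval2 (l+1) (by omega) (by omega)]
        have h' := W2.adj_getVert_succ (i := t + s - (l+1)) (by omega)
        rw [show t + s - (l+1) + 1 = t + s - l by omega] at h'
        exact h'.symm
  · intro i hi j hj hij
    by_cases hit : i ≤ t <;> by_cases hjt : j ≤ t
    · rw [hval1 i hit, hval1 j hjt] at hij
      exact getVert_inj hW1 (hit.trans ht2) (hjt.trans ht2) hij
    · rw [hval1 i hit, hval2 j (by omega) hj] at hij
      exfalso
      rcases Nat.eq_zero_or_pos i with hi0 | hi0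
      · subst hi0
        rw [W1.getVert_zero] at hij
        have h0 : W2.getVert (t + s - j) = W2.getVert 0 := by
          rw [W2.getVert_zero]; exact hij.symm
        have := getVert_inj hW2 (by omega) (by omega) h0
        omega
      · have := hcross (t + s - j) i (by omega) (by omega) hi0 (hit.trans ht2) hij.symm
        omega
    · rw [hval2 i (by omega) hi, hval1 j hjt] at hij
      exfalso
      rcases Nat.eq_zero_or_pos j with hj0 | hj0
      · subst hj0
        rw [W1.getVert_zero] at hij
        have h0 : W2.getVert (t + s - i) = W2.getVert 0 := by
          rw [W2.getVert_zero]; exact hij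
        have := getVert_inj hW2 (by omega) (by omega) h0
        omega
      · have := hcross (t + s - i) j (by omega) (by omega) hj0 (hjt.trans ht2) hij
        omega
    · rw [hval2 i (by omega) hi, hval2 j (by omega) hj] at hij
      have := getVert_inj hW2 (by omega) (by omega) hij
      omega
  · intro l hl1 hl2
    by_cases hlt : l ≤ t
    · exact Or.inl ⟨hlt, hval1 l hlt⟩
    · exact Or.inr ⟨t + s - l, by omega, by omega, rfl, hval2 l (by omega) hl2⟩

/-- The minimal meeting of two paths with distinct second vertices has odd total. -/
lemma meet_odd
    (hcyc : ∀ (x : V) (c : G.Walk x x), c.IsCycle → Even c.length → ¬ c.length ≤ 2 * k)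
    {u v : V} (X Y : G.Walk u v) (hX : X.IsPath) (hY : Y.IsPath)
    (hXk : X.length ≤ k) (hYk : Y.length ≤ k)
    (hsec : X.getVert 1 ≠ Y.getVert 1)
    (p q : ℕ) (hp1 : 1 ≤ p) (hp2 : p ≤ X.length) (hq1 : 1 ≤ q) (hq2 : q ≤ Y.length)
    (hpq : X.getVert p = Y.getVert q)
    (hmin : ∀ i l, 1 ≤ i → i ≤ X.length → 1 ≤ l → l ≤ Y.length →
      X.getVert i = Y.getVert l → p + q ≤ i + l) :
    ¬ Even (p + q) := by
  intro heven
  refine two_arms_false hcyc X.getVert Y.getVert p q hp1 hq1 ?_ ?_ hpq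
    (fun i hi => X.adj_getVert_succ (by omega))
    (fun i hi => Y.adj_getVert_succ (by omega))
    (fun i hi j hj hij => getVert_inj hX (hi.trans hp2) (hj.trans hp2) hij)
    (fun i hi j hj hij => getVert_inj hY (hi.trans hq2) (hj.trans hq2) hij)
    ?_ heven (by omega)
  · rintro ⟨h1, h2⟩
    subst h1
    subst h2
    exact hsec hpq
  · rw [X.getVert_zero, Y.getVert_zero]
  · intro i hi1 hi2 l hl1 hl2 hil
    have := hmin i l hi1 (hi2.trans hp2) hl1 (hl2.trans hq2) hil
    omega


/-- Case I of the three-path argument: the third path `C` first hits the minimal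
meeting cycle of `X` and `Y` on the `X`-side at index `α`. -/
lemma caseI_aux
    (hcyc : ∀ (x : V) (c : G.Walk x x), c.IsCycle → Even c.length → ¬ c.length ≤ 2 * k)
    {u v : V} (X Y C : G.Walk u v)
    (hX : X.IsPath) (hY : Y.IsPath) (hC : C.IsPath)
    (hXk : X.length ≤ k) (hYk : Y.length ≤ k) (hCk : C.length ≤ k)
    (hxc : X.getVert 1 ≠ C.getVert 1) (hyc : Y.getVert 1 ≠ C.getVert 1)
    (p q : ℕ) (hp1 : 1 ≤ p) (hp2 : p ≤ X.length) (hq1 : 1 ≤ q) (hq2 : q ≤ Y.length)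
    (hpq : X.getVert p = Y.getVert q)
    (hmin : ∀ i l, 1 ≤ i → i ≤ X.length → 1 ≤ l → l ≤ Y.length →
      X.getVert i = Y.getVert l → p + q ≤ i + l)
    (hminXC : ∀ i l, 1 ≤ i → i ≤ X.length → 1 ≤ l → l ≤ C.length →
      X.getVert i = C.getVert l → p + q ≤ i + l)
    (hOdd : ¬ Even (p + q))
    (f : ℕ) (hf1 : 1 ≤ f) (hf2 : f ≤ C.length)
    (hnoX : ∀ i, 1 ≤ i → i < f → ∀ β, 1 ≤ β → β ≤ p → C.getVert i ≠ X.getVert β)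
    (hnoY : ∀ i, 1 ≤ i → i < f → ∀ β, 1 ≤ β → β ≤ q → C.getVert i ≠ Y.getVert β)
    (α : ℕ) (hα1 : 1 ≤ α) (hα2 : α ≤ p) (hit : C.getVert f = X.getVert α) : False := by
  have key1 : p + q ≤ α + f := hminXC α f hα1 (hα2.trans hp2) hf1 hf2 hit.symm
  by_cases hpar : Even (f + α)
  · refine two_arms_false hcyc C.getVert X.getVert f α hf1 hα1 ?_ ?_ hit
      (fun i hi => C.adj_getVert_succ (by omega))
      (fun i hi => X.adj_getVert_succ (by omega))
      (fun i hi j hj hij => getVert_inj hC (hi.trans hf2) (hj.trans hf2) hij)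
      (fun i hi j hj hij => getVert_inj hX (by omega) (by omega) hij)
      ?_ hpar (by omega)
    · rintro ⟨h1, h2⟩
      rw [h1, h2] at hit
      exact hxc hit.symm
    · rw [C.getVert_zero, X.getVert_zero]
    · intro i hi1 hi2 l hl1 hl2 hil
      rcases Nat.lt_or_ge i f with h | h
      · exact absurd hil (hnoX i hi1 h l hl1 (hl2.trans hα2))
      · have hif : i = f := by omega
        subst hif
        have : l = α := getVert_inj hX (by omega) (by omega) (by rw [← hil, hit])
        exact ⟨rfl, this⟩
  · set harm : ℕ → V := fun l => if l ≤ q then Y.getVert l else X.getVert (q + p - l)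
      with hharm
    obtain ⟨ha0, haend, haadj, hainj, hacl⟩ :=
      comp_arm Y X hY hX q p α hq1 hq2 hα1 hα2 hp2 hpq
        (fun i l hi1 hi2 hl1 hl2 h => by
          have := hmin i l hi1 hi2 hl1 hl2 h; omega)
        harm (fun l => rfl)
    refine two_arms_false hcyc C.getVert harm f (q + (p - α)) hf1 (by omega) ?_ ?_ ?_
      (fun i hi => C.adj_getVert_succ (by omega)) haadj
      (fun i hi j hj hij => getVert_inj hC (hi.trans hf2) (hj.trans hf2) hij) hainj
      ?_ ?_ ?_
    · rintro ⟨h1, h2⟩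
      have hq1' : q = 1 := by omega
      have hpα : p = α := by omega
      rcases hacl 1 (by omega) (by omega) with ⟨hlq, hv⟩ | ⟨idx, hi1, hi2, hi3, hv⟩
      · -- harm 1 = Y 1 ; also harm 1 = harm (q + (p-α)) = X α = C f = C 1
        have hh : harm 1 = X.getVert α := by
          rw [← haend]; congr 1; omega
        rw [hv] at hh
        rw [h1] at hit
        exact hyc (by rw [hh, ← hit])
      · omega
    · rw [C.getVert_zero, ha0]
    · rw [haend]; exact hit
    · intro i hi1 hi2 l hl1 hl2 hil
      rcases hacl l hl1 hl2 with ⟨hlq, hv⟩ | ⟨idx, hidx1, hidx2, hidx3, hv⟩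
      · rw [hv] at hil
        rcases Nat.lt_or_ge i f with h | h
        · exact absurd hil (hnoY i hi1 h l hl1 hlq)
        · have hif : i = f := by omega
          subst hif
          have hXY : X.getVert α = Y.getVert l := by rw [← hit, hil]
          have := hmin α l hα1 (hα2.trans hp2) hl1 (hlq.trans hq2) hXY
          exact ⟨rfl, by omega⟩
      · rw [hv] at hil
        rcases Nat.lt_or_ge i f with h | h
        · exact absurd hil (hnoX i hi1 h idx (by omega) (by omega))
        · have hif : i = f := by omega
          subst hif
          have : idx = α := getVert_inj hX (by omega) (by omega) (by rw [← hil, hit])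
          exact ⟨rfl, by omega⟩
    · have e1 : ¬ (f + α) % 2 = 0 := by rwa [Nat.even_iff] at hpar
      have e2 : (p + q) % 2 = 1 := by
        rw [Nat.even_iff] at hOdd
        omega
      rw [Nat.even_iff]
      omega
    · omega


/-- Core of the three-path lemma, after normalizing so that the pair `(A,B)`
attains the globally minimal meeting sum `p + q` with `p < q`. -/
lemma core
    (hcyc : ∀ (x : V) (c : G.Walk x x), c.IsCycle → Even c.length → ¬ c.length ≤ 2 * k)
    {u v : V} (A B C : G.Walk u v)
    (hA : A.IsPath) (hB : B.IsPath) (hC : C.IsPath)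
    (hAk : A.length ≤ k) (hBk : B.length ≤ k) (hCk : C.length ≤ k)
    (hA1 : 1 ≤ A.length) (hB1 : 1 ≤ B.length) (hC1 : 1 ≤ C.length)
    (hab : A.getVert 1 ≠ B.getVert 1) (hac : A.getVert 1 ≠ C.getVert 1)
    (hbc : B.getVert 1 ≠ C.getVert 1)
    (p q : ℕ) (hp1 : 1 ≤ p) (hp2 : p ≤ A.length) (hq1 : 1 ≤ q) (hq2 : q ≤ B.length)
    (hpq : A.getVert p = B.getVert q) (hplt : p < q)
    (hminAB : ∀ i l, 1 ≤ i → i ≤ A.length → 1 ≤ l → l ≤ B.length →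
      A.getVert i = B.getVert l → p + q ≤ i + l)
    (hminAC : ∀ i l, 1 ≤ i → i ≤ A.length → 1 ≤ l → l ≤ C.length →
      A.getVert i = C.getVert l → p + q ≤ i + l)
    (hminBC : ∀ i l, 1 ≤ i → i ≤ B.length → 1 ≤ l → l ≤ C.length →
      B.getVert i = C.getVert l → p + q ≤ i + l) : False := by
  have hOddAB : ¬ Even (p + q) :=
    meet_odd hcyc A B hA hB hAk hBk hab p q hp1 hp2 hq1 hq2 hpq hminAB
  by_cases hI : ∃ i, i ∈ {i : ℕ | 1 ≤ i ∧ i ≤ C.length ∧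
      ((∃ β, 1 ≤ β ∧ β ≤ p ∧ C.getVert i = A.getVert β) ∨
       (∃ β, 1 ≤ β ∧ β ≤ q ∧ C.getVert i = B.getVert β))}
  · -- Case I: C hits the minimal meeting cycle of (A,B)
    have hfmem := Nat.sInf_mem hI
    set f := sInf {i : ℕ | 1 ≤ i ∧ i ≤ C.length ∧
      ((∃ β, 1 ≤ β ∧ β ≤ p ∧ C.getVert i = A.getVert β) ∨
       (∃ β, 1 ≤ β ∧ β ≤ q ∧ C.getVert i = B.getVert β))} with hfdef
    obtain ⟨hf1, hf2, hfhit⟩ := hfmem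
    have hnoX : ∀ i, 1 ≤ i → i < f → ∀ β, 1 ≤ β → β ≤ p → C.getVert i ≠ A.getVert β := by
      intro i h1 h2 β hb1 hb2 hne
      have hle := Nat.sInf_le (s := {i : ℕ | 1 ≤ i ∧ i ≤ C.length ∧
        ((∃ β, 1 ≤ β ∧ β ≤ p ∧ C.getVert i = A.getVert β) ∨
         (∃ β, 1 ≤ β ∧ β ≤ q ∧ C.getVert i = B.getVert β))})
        (show i ∈ _ from ⟨h1, by omega, Or.inl ⟨β, hb1, hb2, hne⟩⟩)
      rw [← hfdef] at hle
      omega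
    have hnoY : ∀ i, 1 ≤ i → i < f → ∀ β, 1 ≤ β → β ≤ q → C.getVert i ≠ B.getVert β := by
      intro i h1 h2 β hb1 hb2 hne
      have hle := Nat.sInf_le (s := {i : ℕ | 1 ≤ i ∧ i ≤ C.length ∧
        ((∃ β, 1 ≤ β ∧ β ≤ p ∧ C.getVert i = A.getVert β) ∨
         (∃ β, 1 ≤ β ∧ β ≤ q ∧ C.getVert i = B.getVert β))})
        (show i ∈ _ from ⟨h1, by omega, Or.inr ⟨β, hb1, hb2, hne⟩⟩)
      rw [← hfdef] at hle
      omega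
    rcases hfhit with ⟨α, h1, h2, h3⟩ | ⟨β, h1, h2, h3⟩
    · exact caseI_aux hcyc A B C hA hB hC hAk hBk hCk hac hbc p q hp1 hp2 hq1 hq2 hpq
        hminAB hminAC hOddAB f hf1 hf2 hnoX hnoY α h1 h2 h3
    · refine caseI_aux hcyc B A C hB hA hC hBk hAk hCk hbc hac q p hq1 hq2 hp1 hp2
        hpq.symm ?_ ?_ ?_ f hf1 hf2 hnoY hnoX β h1 h2 h3
      · intro i l a b c d hh
        have := hminAB l i c d a b hh.symm
        omega
      · intro i l a b c d hh
        have := hminBC i l a b c d hh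
        omega
      · intro hh
        apply hOddAB
        rwa [add_comm] at hh
  · -- Case II: C misses the minimal meeting cycle of (A,B)
    have hnoA : ∀ i l, 1 ≤ i → i ≤ A.length → 1 ≤ l → l ≤ C.length →
        A.getVert i = C.getVert l → p < i := by
      intro i l h1 h2 h3 h4 h5
      by_contra hle
      exact hI ⟨l, h3, h4, Or.inl ⟨i, h1, by omega, h5.symm⟩⟩
    have hnoB : ∀ i l, 1 ≤ i → i ≤ B.length → 1 ≤ l → l ≤ C.length →
        B.getVert i = C.getVert l → q < i := by
      intro i l h1 h2 h3 h4 h5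
      by_contra hle
      exact hI ⟨l, h3, h4, Or.inr ⟨i, h1, by omega, h5.symm⟩⟩
    obtain ⟨b3, c3, hb31, hb32, hc31, hc32, hpq3, hmin3⟩ := min_meet B C hB1 hC1
    have hb3q : q < b3 := hnoB b3 c3 hb31 hb32 hc31 hc32 hpq3
    have hOdd3 : ¬ Even (b3 + c3) :=
      meet_odd hcyc B C hB hC hBk hCk hbc b3 c3 hb31 hb32 hc31 hc32 hpq3 hmin3
    have hS2ne : ∃ i, i ∈ {i : ℕ | 1 ≤ i ∧ i ≤ A.length ∧
        ((∃ β, 1 ≤ β ∧ β ≤ b3 ∧ A.getVert i = B.getVert β) ∨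
         (∃ γ, 1 ≤ γ ∧ γ ≤ c3 ∧ A.getVert i = C.getVert γ))} :=
      ⟨p, hp1, hp2, Or.inl ⟨q, hq1, by omega, hpq⟩⟩
    have hmem := Nat.sInf_mem hS2ne
    set h := sInf {i : ℕ | 1 ≤ i ∧ i ≤ A.length ∧
        ((∃ β, 1 ≤ β ∧ β ≤ b3 ∧ A.getVert i = B.getVert β) ∨
         (∃ γ, 1 ≤ γ ∧ γ ≤ c3 ∧ A.getVert i = C.getVert γ))} with hhdef
    obtain ⟨hh1, hh2, hhit⟩ := hmem
    have hhp : h ≤ p := by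
      have hle := Nat.sInf_le (s := {i : ℕ | 1 ≤ i ∧ i ≤ A.length ∧
        ((∃ β, 1 ≤ β ∧ β ≤ b3 ∧ A.getVert i = B.getVert β) ∨
         (∃ γ, 1 ≤ γ ∧ γ ≤ c3 ∧ A.getVert i = C.getVert γ))})
        (show p ∈ _ from ⟨hp1, hp2, Or.inl ⟨q, hq1, by omega, hpq⟩⟩)
      rw [← hhdef] at hle
      exact hle
    have hnoh1 : ∀ i, 1 ≤ i → i < h → ∀ β, 1 ≤ β → β ≤ b3 →
        A.getVert i ≠ B.getVert β := by
      intro i h1 h2 β hb1 hb2 hne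
      have hle := Nat.sInf_le (s := {i : ℕ | 1 ≤ i ∧ i ≤ A.length ∧
        ((∃ β, 1 ≤ β ∧ β ≤ b3 ∧ A.getVert i = B.getVert β) ∨
         (∃ γ, 1 ≤ γ ∧ γ ≤ c3 ∧ A.getVert i = C.getVert γ))})
        (show i ∈ _ from ⟨h1, by omega, Or.inl ⟨β, hb1, hb2, hne⟩⟩)
      rw [← hhdef] at hle
      omega
    have hnoh2 : ∀ i, 1 ≤ i → i < h → ∀ γ, 1 ≤ γ → γ ≤ c3 →
        A.getVert i ≠ C.getVert γ := by
      intro i h1 h2 γ hb1 hb2 hne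
      have hle := Nat.sInf_le (s := {i : ℕ | 1 ≤ i ∧ i ≤ A.length ∧
        ((∃ β, 1 ≤ β ∧ β ≤ b3 ∧ A.getVert i = B.getVert β) ∨
         (∃ γ, 1 ≤ γ ∧ γ ≤ c3 ∧ A.getVert i = C.getVert γ))})
        (show i ∈ _ from ⟨h1, by omega, Or.inr ⟨γ, hb1, hb2, hne⟩⟩)
      rw [← hhdef] at hle
      omega
    rcases hhit with ⟨β, hβ1, hβ2, hβ3⟩ | ⟨γ, hγ1, hγ2, hγ3⟩
    swap
    · have := hnoA h γ hh1 hh2 hγ1 (hγ2.trans hc32) hγ3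
      omega
    have hβb3 : β < b3 := by
      rcases Nat.eq_or_lt_of_le hβ2 with he | hlt
      · exfalso
        rw [he, hpq3] at hβ3
        have := hnoA h c3 hh1 hh2 hc31 hc32 hβ3
        omega
      · exact hlt
    have key : p + q ≤ h + β := hminAB h β hh1 (hhp.trans hp2) hβ1 (hβ2.trans hb32) hβ3
    by_cases hpar : Even (h + β)
    · refine two_arms_false hcyc A.getVert B.getVert h β hh1 hβ1 ?_ ?_ hβ3
        (fun i hi => A.adj_getVert_succ (by omega))
        (fun i hi => B.adj_getVert_succ (by omega))
        (fun i hi j hj hij => getVert_inj hA (by omega) (by omega) hij)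
        (fun i hi j hj hij => getVert_inj hB (by omega) (by omega) hij)
        ?_ hpar (by omega)
      · rintro ⟨e1, e2⟩
        rw [e1, e2] at hβ3
        exact hab hβ3
      · rw [A.getVert_zero, B.getVert_zero]
      · intro i hi1 hi2 l hl1 hl2 hil
        rcases Nat.lt_or_ge i h with hlt | hge
        · exact absurd hil (hnoh1 i hi1 hlt l hl1 (by omega))
        · have hif : i = h := by omega
          subst hif
          have : l = β := getVert_inj hB (by omega) (by omega) (by rw [← hil, hβ3])
          exact ⟨rfl, this⟩
    · set harm : ℕ → V := fun l => if l ≤ c3 then C.getVert l else B.getVert (c3 + b3 - l)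
        with hharm
      obtain ⟨ha0, haend, haadj, hainj, hacl⟩ :=
        comp_arm C B hC hB c3 b3 β hc31 hc32 hβ1 (by omega) hb32 hpq3
          (fun i l hi1 hi2 hl1 hl2 hil => by
            have := hmin3 i l hi1 hi2 hl1 hl2 hil; omega)
          harm (fun l => rfl)
      refine two_arms_false hcyc A.getVert harm h (c3 + (b3 - β)) hh1 (by omega) ?_ ?_ ?_
        (fun i hi => A.adj_getVert_succ (by omega)) haadj
        (fun i hi j hj hij => getVert_inj hA (by omega) (by omega) hij) hainj
        ?_ ?_ ?_
      · rintro ⟨e1, e2⟩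
        omega
      · rw [A.getVert_zero, ha0]
      · rw [haend]; exact hβ3
      · intro i hi1 hi2 l hl1 hl2 hil
        rcases hacl l hl1 hl2 with ⟨hlq, hv⟩ | ⟨idx, hidx1, hidx2, hidx3, hv⟩
        · rw [hv] at hil
          rcases Nat.lt_or_ge i h with hlt | hge
          · exact absurd hil (hnoh2 i hi1 hlt l hl1 hlq)
          · exfalso
            have := hnoA i l hi1 (by omega) hl1 (hlq.trans hc32) hil
            omega
        · rw [hv] at hil
          rcases Nat.lt_or_ge i h with hlt | hge
          · exact absurd hil (hnoh1 i hi1 hlt idx (by omega) (by omega))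
          · have hif : i = h := by omega
            subst hif
            have : idx = β := getVert_inj hB (by omega) (by omega) (by rw [← hil, hβ3])
            exact ⟨rfl, by omega⟩
      · have e1 : ¬ (h + β) % 2 = 0 := by rwa [Nat.even_iff] at hpar
        have e2 : ¬ (b3 + c3) % 2 = 0 := by rwa [Nat.even_iff] at hOdd3
        rw [Nat.even_iff]
        omega
      · omega


/-- `core` without the orientation hypothesis `p < q`. -/
lemma core_sym
    (hcyc : ∀ (x : V) (c : G.Walk x x), c.IsCycle → Even c.length → ¬ c.length ≤ 2 * k)
    {u v : V} (A B C : G.Walk u v)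
    (hA : A.IsPath) (hB : B.IsPath) (hC : C.IsPath)
    (hAk : A.length ≤ k) (hBk : B.length ≤ k) (hCk : C.length ≤ k)
    (hA1 : 1 ≤ A.length) (hB1 : 1 ≤ B.length) (hC1 : 1 ≤ C.length)
    (hab : A.getVert 1 ≠ B.getVert 1) (hac : A.getVert 1 ≠ C.getVert 1)
    (hbc : B.getVert 1 ≠ C.getVert 1)
    (p q : ℕ) (hp1 : 1 ≤ p) (hp2 : p ≤ A.length) (hq1 : 1 ≤ q) (hq2 : q ≤ B.length)
    (hpq : A.getVert p = B.getVert q)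
    (hminAB : ∀ i l, 1 ≤ i → i ≤ A.length → 1 ≤ l → l ≤ B.length →
      A.getVert i = B.getVert l → p + q ≤ i + l)
    (hminAC : ∀ i l, 1 ≤ i → i ≤ A.length → 1 ≤ l → l ≤ C.length →
      A.getVert i = C.getVert l → p + q ≤ i + l)
    (hminBC : ∀ i l, 1 ≤ i → i ≤ B.length → 1 ≤ l → l ≤ C.length →
      B.getVert i = C.getVert l → p + q ≤ i + l) : False := by
  have hOdd : ¬ Even (p + q) :=
    meet_odd hcyc A B hA hB hAk hBk hab p q hp1 hp2 hq1 hq2 hpq hminAB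
  have hpne : p ≠ q := by
    intro he
    exact hOdd (by rw [he]; exact ⟨q, rfl⟩)
  rcases Nat.lt_or_ge p q with hlt | hge
  · exact core hcyc A B C hA hB hC hAk hBk hCk hA1 hB1 hC1 hab hac hbc
      p q hp1 hp2 hq1 hq2 hpq hlt hminAB hminAC hminBC
  · refine core hcyc B A C hB hA hC hBk hAk hCk hB1 hA1 hC1
      (Ne.symm hab) hbc hac q p hq1 hq2 hp1 hp2 hpq.symm (by omega)
      ?_ ?_ ?_
    · intro i l a b c d hh
      have := hminAB l i c d a b hh.symm
      omega
    · intro i l a b c d hh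
      have := hminBC i l a b c d hh
      omega
    · intro i l a b c d hh
      have := hminAC i l a b c d hh
      omega

/-- Three paths between the same two vertices, each of length at most `k`,
cannot have pairwise distinct second vertices. -/
lemma three_path
    (hcyc : ∀ (x : V) (c : G.Walk x x), c.IsCycle → Even c.length → ¬ c.length ≤ 2 * k)
    {u v : V} (A B C : G.Walk u v)
    (hA : A.IsPath) (hB : B.IsPath) (hC : C.IsPath)
    (hAk : A.length ≤ k) (hBk : B.length ≤ k) (hCk : C.length ≤ k)
    (hA1 : 1 ≤ A.length) (hB1 : 1 ≤ B.length) (hC1 : 1 ≤ C.length)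
    (hab : A.getVert 1 ≠ B.getVert 1) (hac : A.getVert 1 ≠ C.getVert 1)
    (hbc : B.getVert 1 ≠ C.getVert 1) : False := by
  obtain ⟨p1, q1, hp11, hp12, hq11, hq12, hpq1, m1⟩ := min_meet A B hA1 hB1
  obtain ⟨p2, q2, hp21, hp22, hq21, hq22, hpq2, m2⟩ := min_meet A C hA1 hC1
  obtain ⟨p3, q3, hp31, hp32, hq31, hq32, hpq3, m3⟩ := min_meet B C hB1 hC1
  rcases Nat.le_total (p1 + q1) (p2 + q2) with h12 | h21
  · rcases Nat.le_total (p1 + q1) (p3 + q3) with h13 | h31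
    · -- pair (A,B) minimal
      exact core_sym hcyc A B C hA hB hC hAk hBk hCk hA1 hB1 hC1 hab hac hbc
        p1 q1 hp11 hp12 hq11 hq12 hpq1 m1
        (fun i l a b c d hh => le_trans h12 (m2 i l a b c d hh))
        (fun i l a b c d hh => le_trans h13 (m3 i l a b c d hh))
    · -- pair (B,C) minimal
      exact core_sym hcyc B C A hB hC hA hBk hCk hAk hB1 hC1 hA1 hbc (Ne.symm hab)
        (Ne.symm hac) p3 q3 hp31 hp32 hq31 hq32 hpq3 m3
        (fun i l a b c d hh => le_trans h31 (by have := m1 l i c d a b hh.symm; omega))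
        (fun i l a b c d hh => le_trans (le_trans h31 h12) (by have := m2 l i c d a b hh.symm; omega))
  · rcases Nat.le_total (p2 + q2) (p3 + q3) with h23 | h32
    · -- pair (A,C) minimal
      exact core_sym hcyc A C B hA hC hB hAk hCk hBk hA1 hC1 hB1 hac hab (Ne.symm hbc)
        p2 q2 hp21 hp22 hq21 hq22 hpq2 m2
        (fun i l a b c d hh => le_trans h21 (m1 i l a b c d hh))
        (fun i l a b c d hh => le_trans h23 (by have := m3 l i c d a b hh.symm; omega))
    · -- pair (B,C) minimal
      exact core_sym hcyc B C A hB hC hA hBk hCk hAk hB1 hC1 hA1 hbc (Ne.symm hab)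
        (Ne.symm hac) p3 q3 hp31 hp32 hq31 hq32 hpq3 m3
        (fun i l a b c d hh => le_trans (le_trans h32 h21) (by have := m1 l i c d a b hh.symm; omega))
        (fun i l a b c d hh => le_trans h32 (by have := m2 l i c d a b hh.symm; omega))


lemma walk_eq_of_tail {x y : V} (p p' : G.Walk x y) (hnp : ¬p.Nil) (hnp' : ¬p'.Nil)
    (hs : p.getVert 1 = p'.getVert 1) (ht : HEq p.tail p'.tail) : p = p' := by
  have key : ∀ {a b : V} (hab : a = b) (q : G.Walk a y) (q' : G.Walk b y), HEq q q' →
      ∀ (h1 : G.Adj x a) (h2 : G.Adj x b),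
      SimpleGraph.Walk.cons h1 q = SimpleGraph.Walk.cons h2 q' := by
    intro a b hab
    subst hab
    intro q q' hqq h1 h2
    rw [heq_iff_eq] at hqq
    subst hqq
    rfl
  rw [← SimpleGraph.Walk.cons_tail_eq p hnp, ← SimpleGraph.Walk.cons_tail_eq p' hnp']
  exact key hs p.tail p'.tail ht _ _

lemma length_one_unique {x y : V} {p q : G.Walk x y} (hp : p.length = 1)
    (hq : q.length = 1) : p = q := by
  cases p with
  | nil => simp at hp
  | cons h p' =>
    cases p' with
    | nil =>
      cases q with
      | nil => simp at hq
      | cons h2 q' =>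
        cases q' with
        | nil => rfl
        | cons h3 q'' => simp [SimpleGraph.Walk.length_cons] at hq
    | cons h3 p'' => simp [SimpleGraph.Walk.length_cons] at hp

lemma sigma_copy_eq {y : V} {w w' : V} (q : G.Walk w y) (h : w = w') :
    (⟨w, q⟩ : Σ z, G.Walk z y) = ⟨w', q.copy h rfl⟩ := by
  subst h
  rw [SimpleGraph.Walk.copy_rfl_rfl]

lemma count_le
    (hcyc : ∀ (x : V) (c : G.Walk x x), c.IsCycle → Even c.length → ¬ c.length ≤ 2 * k) :
    ∀ (j : ℕ), 1 ≤ j → j ≤ k → ∀ (x y : V) (S : Set V), x ∉ S →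
      ({p : G.Walk x y | p.IsPath ∧ p.length = j ∧ ∀ s ∈ S, s ∉ p.support}).Finite →
      ({p : G.Walk x y | p.IsPath ∧ p.length = j ∧ ∀ s ∈ S, s ∉ p.support}).ncard ≤
        2 ^ (j - 1) := by
  intro j
  induction j with
  | zero => intro h1; omega
  | succ n ih =>
    intro _ h2 x y S hxS hfin
    by_cases hn : n = 0
    · -- base case : length 1
      subst hn
      rcases Set.eq_empty_or_nonempty
        {p : G.Walk x y | p.IsPath ∧ p.length = 1 ∧ ∀ s ∈ S, s ∉ p.support} with he | ⟨p0, hp0⟩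
      · rw [he]; simp
      · have hsub : {p : G.Walk x y | p.IsPath ∧ p.length = 1 ∧ ∀ s ∈ S, s ∉ p.support} ⊆
            {p0} := by
          intro q hq
          exact length_one_unique hq.2.1 hp0.2.1
        calc _ ≤ ({p0} : Set (G.Walk x y)).ncard :=
              Set.ncard_le_ncard hsub (Set.finite_singleton p0)
          _ ≤ 2 ^ (1 - 1) := by simp
    · have hn1 : 1 ≤ n := by omega
      rcases Set.eq_empty_or_nonempty
        {p : G.Walk x y | p.IsPath ∧ p.length = n + 1 ∧ ∀ s ∈ S, s ∉ p.support}
        with he | ⟨p0, hp0⟩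
      · rw [he]; simp
      · -- there are at most two possible second vertices
        have hsnd : ∀ (p : G.Walk x y), p ∈ {p : G.Walk x y | p.IsPath ∧ p.length = n + 1 ∧
            ∀ s ∈ S, s ∉ p.support} → G.Adj x (p.getVert 1) := by
          intro p hp
          have := p.adj_getVert_succ (i := 0) (by rw [hp.2.1]; omega)
          simpa using this
        have hW : ∃ w1 w2, G.Adj x w1 ∧ G.Adj x w2 ∧
            (∀ p ∈ {p : G.Walk x y | p.IsPath ∧ p.length = n + 1 ∧
              ∀ s ∈ S, s ∉ p.support}, p.getVert 1 = w1 ∨ p.getVert 1 = w2) ∧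
            (∃ p1 ∈ {p : G.Walk x y | p.IsPath ∧ p.length = n + 1 ∧
              ∀ s ∈ S, s ∉ p.support}, p1.getVert 1 = w1) ∧
            (∃ p2 ∈ {p : G.Walk x y | p.IsPath ∧ p.length = n + 1 ∧
              ∀ s ∈ S, s ∉ p.support}, p2.getVert 1 = w2) := by
          by_cases hall : ∀ p ∈ {p : G.Walk x y | p.IsPath ∧ p.length = n + 1 ∧
              ∀ s ∈ S, s ∉ p.support}, p.getVert 1 = p0.getVert 1
          · exact ⟨p0.getVert 1, p0.getVert 1, hsnd p0 hp0, hsnd p0 hp0,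
              fun p hp => Or.inl (hall p hp), ⟨p0, hp0, rfl⟩, ⟨p0, hp0, rfl⟩⟩
          · push_neg at hall
            obtain ⟨p1, hp1, hne⟩ := hall
            refine ⟨p0.getVert 1, p1.getVert 1, hsnd p0 hp0, hsnd p1 hp1, ?_,
              ⟨p0, hp0, rfl⟩, ⟨p1, hp1, rfl⟩⟩
            intro p hp
            by_contra hcon
            push_neg at hcon
            exact three_path hcyc p0 p1 p hp0.1 hp1.1 hp.1
              (by rw [hp0.2.1]; omega) (by rw [hp1.2.1]; omega) (by rw [hp.2.1]; omega)
              (by rw [hp0.2.1]; omega) (by rw [hp1.2.1]; omega) (by rw [hp.2.1]; omega)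
              (Ne.symm hne) (Ne.symm hcon.1) (Ne.symm hcon.2)
        obtain ⟨w1, w2, hadj1, hadj2, hWmem, ⟨pw1, hpw1, hpw1e⟩, ⟨pw2, hpw2, hpw2e⟩⟩ := hW
        -- properties of a realized second vertex
        have hwprop : ∀ (p : G.Walk x y), p ∈ {p : G.Walk x y | p.IsPath ∧ p.length = n + 1 ∧
            ∀ s ∈ S, s ∉ p.support} →
            p.getVert 1 ∉ (S ∪ {x} : Set V) ∧ p.getVert 1 ≠ y := by
          intro p hp
          obtain ⟨hp1, hp2, hp3⟩ := hp
          constructor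
          · rintro (hs | hs)
            · exact hp3 _ hs (SimpleGraph.Walk.mem_support_iff_exists_getVert.mpr
                ⟨1, rfl, by omega⟩)
            · rw [Set.mem_singleton_iff] at hs
              have : (1 : ℕ) = 0 := getVert_inj hp1 (by omega) (by omega)
                (by rw [hs, SimpleGraph.Walk.getVert_zero])
              omega
          · intro hy
            have : (1 : ℕ) = p.length := getVert_inj hp1 (by omega) (by omega)
              (by rw [hy, SimpleGraph.Walk.getVert_length])
            omega
        -- tail sets are finite
        have hTfin : ∀ w, G.Adj x w →
            ({q : G.Walk w y | q.IsPath ∧ q.length = n ∧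
              ∀ s ∈ (S ∪ {x} : Set V), s ∉ q.support}).Finite := by
          intro w hadj
          apply Set.Finite.of_finite_image (f := fun q => SimpleGraph.Walk.cons hadj q)
          · apply hfin.subset
            rintro _ ⟨q, ⟨hq1, hq2, hq3⟩, rfl⟩
            refine ⟨?_, by simp [hq2], ?_⟩
            · rw [SimpleGraph.Walk.cons_isPath_iff]
              exact ⟨hq1, hq3 x (by simp)⟩
            · intro s hs
              rw [SimpleGraph.Walk.support_cons]
              intro hmem
              rcases List.mem_cons.mp hmem with h | h
              · exact hxS (h ▸ hs)
              · exact hq3 s (by simp [hs]) h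
          · intro q1 _ q2 _ he
            simpa using he
        have hTfin1 := hTfin w1 hadj1
        have hTfin2 := hTfin w2 hadj2
        -- apply the inductive hypothesis
        have hT1 : ({q : G.Walk w1 y | q.IsPath ∧ q.length = n ∧
            ∀ s ∈ (S ∪ {x} : Set V), s ∉ q.support}).ncard ≤ 2 ^ (n - 1) := by
          refine ih hn1 (by omega) w1 y (S ∪ {x}) ?_ hTfin1
          rw [← hpw1e]
          exact (hwprop pw1 hpw1).1
        have hT2 : ({q : G.Walk w2 y | q.IsPath ∧ q.length = n ∧
            ∀ s ∈ (S ∪ {x} : Set V), s ∉ q.support}).ncard ≤ 2 ^ (n - 1) := by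
          refine ih hn1 (by omega) w2 y (S ∪ {x}) ?_ hTfin2
          rw [← hpw2e]
          exact (hwprop pw2 hpw2).1
        -- inject the path set into the union of the two tail sets
        have hmain : ({p : G.Walk x y | p.IsPath ∧ p.length = n + 1 ∧
            ∀ s ∈ S, s ∉ p.support}).ncard ≤
            ((Sigma.mk w1 '' {q : G.Walk w1 y | q.IsPath ∧ q.length = n ∧
              ∀ s ∈ (S ∪ {x} : Set V), s ∉ q.support}) ∪
             (Sigma.mk w2 '' {q : G.Walk w2 y | q.IsPath ∧ q.length = n ∧
              ∀ s ∈ (S ∪ {x} : Set V), s ∉ q.support}) :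
              Set (Σ z, G.Walk z y)).ncard := by
          refine Set.ncard_le_ncard_of_injOn (fun p => ⟨p.getVert 1, p.tail⟩) ?_ ?_
            ((hTfin1.image _).union (hTfin2.image _))
          · intro p hp
            have hnil : ¬ p.Nil := by
              rw [SimpleGraph.Walk.not_nil_iff_lt_length, hp.2.1]
              omega
            have htmem : ∀ (w : V) (hw : p.getVert 1 = w),
                (p.tail.copy hw rfl) ∈ {q : G.Walk w y | q.IsPath ∧ q.length = n ∧
                  ∀ s ∈ (S ∪ {x} : Set V), s ∉ q.support} := by
              intro w hw
              refine ⟨by simp [hp.1.tail], ?_, ?_⟩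
              · rw [SimpleGraph.Walk.length_copy]
                have := SimpleGraph.Walk.length_tail_add_one hnil
                rw [hp.2.1] at this
                omega
              · intro s hs
                rw [SimpleGraph.Walk.support_copy]
                intro hmem
                have hsub : p.tail.support = p.support.tail :=
                  SimpleGraph.Walk.support_tail_of_not_nil p hnil
                rcases hs with hs | hs
                · exact hp.2.2 s hs (by
                    rw [hsub] at hmem
                    exact List.mem_of_mem_tail hmem)
                · rw [Set.mem_singleton_iff] at hs
                  subst hs
                  have hcons := SimpleGraph.Walk.cons_support_tail hnil
                  have hnodup := hp.1.support_nodup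
                  rw [← hcons] at hnodup
                  exact (List.nodup_cons.mp hnodup).1 hmem
            rcases hWmem p hp with hw | hw
            · exact Or.inl ⟨p.tail.copy hw rfl, htmem w1 hw, (sigma_copy_eq p.tail hw).symm⟩
            · exact Or.inr ⟨p.tail.copy hw rfl, htmem w2 hw, (sigma_copy_eq p.tail hw).symm⟩
          · intro p hp p' hp' he
            have hnil : ¬ p.Nil := by
              rw [SimpleGraph.Walk.not_nil_iff_lt_length, hp.2.1]; omega
            have hnil' : ¬ p'.Nil := by
              rw [SimpleGraph.Walk.not_nil_iff_lt_length, hp'.2.1]; omega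
            have h1 : p.getVert 1 = p'.getVert 1 := congrArg Sigma.fst he
            have h2 : HEq p.tail p'.tail := by
              have := (Sigma.mk.inj_iff.mp he).2
              exact this
            exact walk_eq_of_tail p p' hnil hnil' h1 h2
        have himg1 : ((Sigma.mk w1 '' {q : G.Walk w1 y | q.IsPath ∧ q.length = n ∧
            ∀ s ∈ (S ∪ {x} : Set V), s ∉ q.support}) : Set (Σ z, G.Walk z y)).ncard ≤
            2 ^ (n - 1) := by
          rw [Set.ncard_image_of_injective _ sigma_mk_injective]
          exact hT1
        have himg2 : ((Sigma.mk w2 '' {q : G.Walk w2 y | q.IsPath ∧ q.length = n ∧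
            ∀ s ∈ (S ∪ {x} : Set V), s ∉ q.support}) : Set (Σ z, G.Walk z y)).ncard ≤
            2 ^ (n - 1) := by
          rw [Set.ncard_image_of_injective _ sigma_mk_injective]
          exact hT2
        have hunion := Set.ncard_union_le
          ((Sigma.mk w1 '' {q : G.Walk w1 y | q.IsPath ∧ q.length = n ∧
            ∀ s ∈ (S ∪ {x} : Set V), s ∉ q.support}) : Set (Σ z, G.Walk z y))
          ((Sigma.mk w2 '' {q : G.Walk w2 y | q.IsPath ∧ q.length = n ∧
            ∀ s ∈ (S ∪ {x} : Set V), s ∉ q.support}))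
        have hpow : 2 ^ (n - 1) + 2 ^ (n - 1) = 2 ^ n := by
          have h' : 2 ^ (n - 1) + 2 ^ (n - 1) = 2 ^ ((n - 1) + 1) := by
            rw [pow_succ]; ring
          rw [h', show n - 1 + 1 = n by omega]
        have : (n + 1) - 1 = n := by omega
        rw [this]
        omega

end EvenCyclePaths

/-- In a graph with no even cycle of length at most `2k`, the number of paths of length
exactly `k` between two distinct vertices `u, v` is less than `2^k`. -/
theorem num_k_paths_lt_two_pow {V : Type*} (G : SimpleGraph V) (k : ℕ) (hk : 2 ≤ k)
    (hcyc : ∀ (x : V) (c : G.Walk x x), c.IsCycle → Even c.length → ¬ c.length ≤ 2 * k)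
    (u v : V) (huv : u ≠ v) :
    {p : G.Walk u v | p.IsPath ∧ p.length = k}.ncard < 2 ^ k := by
  classical
  by_cases hfin : ({p : G.Walk u v | p.IsPath ∧ p.length = k}).Finite
  · have heq : {p : G.Walk u v | p.IsPath ∧ p.length = k} =
        {p : G.Walk u v | p.IsPath ∧ p.length = k ∧ ∀ s ∈ (∅ : Set V), s ∉ p.support} := by
      ext p; simp
    have hle := EvenCyclePaths.count_le hcyc k (by omega) le_rfl u v ∅ (by simp)
      (by rw [← heq]; exact hfin)
    rw [← heq] at hle
    have hlt : 2 ^ (k - 1) < 2 ^ k :=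
      Nat.pow_lt_pow_right (by norm_num) (by omega)
    omega
  · rw [Set.Infinite.ncard hfin]
    exact pow_pos (by norm_num) k
end

section
/- Let G be an n-vertex graph with average degree d ≥ 2 and no cycles (odd or even) of length at most 2k. Then d(d−1)^{k−1} ≤ n. -/
open Finset

namespace MooreAux

variable {W : Type*}

lemma gcongr' {α : Type*} {l : List α} {i j : ℕ} (h : i = j) (hi : i < l.length) :
    l[i]'hi = l[j]'(h ▸ hi) := by subst h; rfl

/-- Non-backtracking adjacency chain, index-based. -/
def NBC (H : SimpleGraph W) (L : List W) : Prop :=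
  (∀ i (h : i + 1 < L.length), H.Adj (L[i]'(by omega)) (L[i+1]'h)) ∧
  (∀ i (h : i + 2 < L.length), L[i+2]'h ≠ L[i]'(by omega))

variable {H : SimpleGraph W}

lemma NBC.tail {a : W} {L : List W} (h : NBC H (a :: L)) : NBC H L := by
  refine ⟨fun i hi => ?_, fun i hi => ?_⟩
  · have := h.1 (i+1) (by simp; omega)
    simpa using this
  · have := h.2 (i+1) (by simp; omega)
    simpa using this

lemma NBC.take {L : List W} (h : NBC H L) (n : ℕ) : NBC H (L.take n) := by
  refine ⟨fun i hi => ?_, fun i hi => ?_⟩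
  · have hl : i + 1 < L.length := lt_of_lt_of_le hi (by simp)
    have := h.1 i hl
    simpa [List.getElem_take] using this
  · have hl : i + 2 < L.length := lt_of_lt_of_le hi (by simp)
    have := h.2 i hl
    simpa [List.getElem_take] using this

lemma NBC.drop {L : List W} (h : NBC H L) (n : ℕ) : NBC H (L.drop n) := by
  refine ⟨fun i hi => ?_, fun i hi => ?_⟩
  · have hl : n + i + 1 < L.length := by simp at hi; omega
    have := h.1 (n+i) hl
    rw [List.getElem_drop, List.getElem_drop]
    convert this using 2 <;> omega
  · have hl : n + i + 2 < L.length := by simp at hi; omega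
    have := h.2 (n+i) hl
    rw [List.getElem_drop, List.getElem_drop]
    intro hx
    apply this
    refine Eq.trans (gcongr' (by omega) _) (hx.trans (gcongr' (by omega) _))

lemma NBC.reverse {L : List W} (h : NBC H L) : NBC H L.reverse := by
  refine ⟨fun i hi => ?_, fun i hi => ?_⟩
  · simp only [List.length_reverse] at hi
    rw [List.getElem_reverse, List.getElem_reverse]
    have hl : (L.length - 1 - (i+1)) + 1 < L.length := by omega
    have := (h.1 (L.length - 1 - (i+1)) hl).symm
    convert this using 2 <;> omega
  · simp only [List.length_reverse] at hi
    rw [List.getElem_reverse, List.getElem_reverse]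
    have hl : (L.length - 1 - (i+2)) + 2 < L.length := by omega
    have := h.2 (L.length - 1 - (i+2)) hl
    intro hx
    apply this
    refine Eq.trans (gcongr' (by omega) _) (hx.symm.trans (gcongr' (by omega) _))

lemma NBC.append {A B : List W} (hA : NBC H A) (hB : NBC H B)
    (h2 : 2 ≤ A.length) (h1 : 1 ≤ B.length)
    (hadj : H.Adj (A[A.length-1]'(by omega)) (B[0]'(by omega)))
    (t1 : A[A.length-2]'(by omega) ≠ B[0]'(by omega))
    (t2 : ∀ (h : 1 < B.length), A[A.length-1]'(by omega) ≠ B[1]'h) :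
    NBC H (A ++ B) := by
  have hlen : (A ++ B).length = A.length + B.length := by simp
  refine ⟨fun i hi => ?_, fun i hi => ?_⟩
  · rw [hlen] at hi
    rcases lt_trichotomy (i+1) A.length with hc | hc | hc
    · rw [List.getElem_append_left (show i + 1 < A.length from hc),
        List.getElem_append_left (show i < A.length by omega)]
      exact hA.1 i hc
    · rw [List.getElem_append_right (show A.length ≤ i + 1 by omega),
        List.getElem_append_left (show i < A.length by omega)]
      rw [gcongr' (show i = A.length - 1 by omega), gcongr' (show i + 1 - A.length = 0 by omega)]
      exact hadj
    · rw [List.getElem_append_right (show A.length ≤ i + 1 by omega),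
        List.getElem_append_right (show A.length ≤ i by omega)]
      have := hB.1 (i - A.length) (by omega)
      convert this using 2 <;> omega
  · rw [hlen] at hi
    rcases lt_trichotomy (i+2) A.length with hc | hc | hc
    · rw [List.getElem_append_left (show i + 2 < A.length from hc),
        List.getElem_append_left (show i < A.length by omega)]
      exact hA.2 i hc
    · rw [List.getElem_append_right (show A.length ≤ i + 2 by omega),
        List.getElem_append_left (show i < A.length by omega)]
      rw [gcongr' (show i + 2 - A.length = 0 by omega), gcongr' (show i = A.length - 2 by omega)]
      exact fun hx => t1 hx.symm
    · rcases lt_trichotomy (i+1) A.length with hd | hd | hd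
      · omega
      · rw [List.getElem_append_right (show A.length ≤ i + 2 by omega),
          List.getElem_append_left (show i < A.length by omega)]
        have hb1 : 1 < B.length := by omega
        rw [gcongr' (show i + 2 - A.length = 1 by omega), gcongr' (show i = A.length - 1 by omega)]
        exact fun hx => (t2 hb1) hx.symm
      · rw [List.getElem_append_right (show A.length ≤ i + 2 by omega),
          List.getElem_append_right (show A.length ≤ i by omega)]
        have := hB.2 (i - A.length) (by omega)
        intro hx
        apply this
        refine Eq.trans (gcongr' (by omega) _) (hx.trans (gcongr' (by omega) _))


lemma gcongr'' {α : Type*} {l : List α} {i j : ℕ} (h : i = j) (hi : i < l.length) :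
    l[i]'hi = l[j]'(h ▸ hi) := by subst h; rfl

/-- Build a walk from a chain of adjacent vertices. -/
def toWalk : (a : W) → (l : List W) →
    (hadj : ∀ i (h : i + 1 < (a :: l).length),
      H.Adj ((a :: l)[i]'(by omega)) ((a :: l)[i+1]'h)) →
    ((b : W) × H.Walk a b)
  | a, [], _ => ⟨a, SimpleGraph.Walk.nil⟩
  | a, c :: t, hadj =>
    let rest := toWalk c t (fun i h => by
      have := hadj (i+1) (by simpa using Nat.succ_lt_succ h)
      simpa using this)
    ⟨rest.1, SimpleGraph.Walk.cons (hadj 0 (by simp)) rest.2⟩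

lemma toWalk_fst (a : W) (l : List W) (hadj) (hne : (a :: l) ≠ [])
    : (toWalk (H := H) a l hadj).1 = (a :: l).getLast hne := by
  induction l generalizing a with
  | nil => simp [toWalk]
  | cons c t ih =>
    rw [toWalk]
    simp only
    rw [ih c _ (by simp)]
    exact (List.getLast_cons (by simp)).symm

lemma toWalk_length (a : W) (l : List W) (hadj)
    : (toWalk (H := H) a l hadj).2.length = l.length := by
  induction l generalizing a with
  | nil => simp [toWalk]
  | cons c t ih =>
    rw [toWalk]
    simp only [SimpleGraph.Walk.length_cons, List.length_cons]
    rw [ih c _]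

lemma toWalk_edges_mem (a : W) (l : List W) (hadj) {x y : W}
    (hm : s(x, y) ∈ (toWalk (H := H) a l hadj).2.edges) :
    ∃ i, ∃ (h : i + 1 < (a :: l).length),
      s((a :: l)[i]'(by omega), (a :: l)[i+1]'h) = s(x, y) := by
  induction l generalizing a with
  | nil => simp [toWalk] at hm
  | cons c t ih =>
    rw [toWalk] at hm
    simp only [SimpleGraph.Walk.edges_cons, List.mem_cons] at hm
    rcases hm with hm | hm
    · exact ⟨0, by simp, by simpa using hm.symm⟩
    · obtain ⟨i, h, hi⟩ := ih c _ hm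
      refine ⟨i + 1, by simpa using Nat.succ_lt_succ h, ?_⟩
      simpa using hi

/-- A closed non-backtracking chain contains a cycle of length at most its edge count. -/
lemma claimP : ∀ (n : ℕ) (L : List W), L.length ≤ n → (h2 : 2 ≤ L.length) → NBC H L →
    (L[0]'(by omega) = L[L.length - 1]'(by omega)) →
    ∃ (x : W) (c : H.Walk x x), c.IsCycle ∧ c.length + 1 ≤ L.length := by
  intro n
  induction n with
  | zero => intro L h1 h2; omega
  | succ n ih =>
    intro L hn h2 hnb hcl
    classical
    by_cases hle : L.length ≤ n
    · exact ih L hle h2 hnb hcl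
    obtain ⟨u, M, rfl⟩ : ∃ u M, L = u :: M := by
      cases L with
      | nil => simp at h2
      | cons u M => exact ⟨u, M, rfl⟩
    obtain ⟨v, rest, rfl⟩ : ∃ v rest, M = v :: rest := by
      cases M with
      | nil => simp at h2
      | cons v rest => exact ⟨v, rest, rfl⟩
    have hadj0 : H.Adj u v := by
      have := hnb.1 0 (by simp)
      simpa using this
    have hlast : (v :: rest).getLast (by simp) = u := by
      have h1 : (v :: rest).getLast (by simp) = (u :: v :: rest).getLast (by simp) :=
        (List.getLast_cons (by simp)).symm
      rw [h1, List.getLast_eq_getElem]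
      exact hcl.symm
    have hadj' : ∀ i (h : i + 1 < (v :: rest).length),
        H.Adj ((v :: rest)[i]'(by omega)) ((v :: rest)[i+1]'h) := (hnb.tail).1
    have hfst : (toWalk (H := H) v rest hadj').1 = u := by
      rw [toWalk_fst (hne := by simp)]; exact hlast
    set p : H.Walk v u := (toWalk (H := H) v rest hadj').2.copy rfl hfst with hp
    have hplen : p.length = rest.length := by
      rw [hp, SimpleGraph.Walk.length_copy]; exact toWalk_length v rest hadj'
    by_cases hA : s(u, v) ∈ p.bypass.edges
    · -- the edge u-v occurs somewhere in the chain after position 0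
      have hmem : s(u, v) ∈ p.edges := SimpleGraph.Walk.edges_bypass_subset p hA
      rw [hp, SimpleGraph.Walk.edges_copy] at hmem
      obtain ⟨i, h, hi⟩ := toWalk_edges_mem v rest hadj' hmem
      simp only [List.length_cons] at h
      have hiL : ∀ (j : ℕ) (hj : j < (v :: rest).length),
          (v :: rest)[j]'hj = (u :: v :: rest)[j+1]'(by simp at hj ⊢; omega) := by
        intro j hj; simp
      rw [hiL i (by simp; omega), hiL (i+1) (by simp; omega)] at hi
      rw [Sym2.eq_iff] at hi
      have hlenL : (u :: v :: rest).length = rest.length + 2 := by simp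
      have hiu : i + 2 < (u :: v :: rest).length := by omega
      rcases hi with ⟨hx, hy⟩ | ⟨hx, hy⟩
      · -- (u::v::rest)[i+1] = u : closed subchain take (i+2)
        have hSlen : ((u :: v :: rest).take (i+2)).length = i + 2 := by
          rw [List.length_take]; omega
        obtain ⟨x, c, hc, hcle⟩ := ih ((u :: v :: rest).take (i+2)) (by omega) (by omega)
          (hnb.take (i+2))
          (by
            rw [gcongr'' (show ((u :: v :: rest).take (i+2)).length - 1 = i + 1 by omega),
              List.getElem_take, List.getElem_take, hx]
            simp)
        exact ⟨x, c, hc, by omega⟩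
      · -- (u::v::rest)[i+1] = v, [i+2] = u
        rcases Nat.eq_zero_or_pos i with rfl | hipos
        · exact absurd (hy.trans (by simp)) (hnb.2 0 hiu)
        · have hSlen : (((u :: v :: rest).drop 1).take (i+1)).length = i + 1 := by
            rw [List.length_take, List.length_drop]; omega
          obtain ⟨x, c, hc, hcle⟩ := ih (((u :: v :: rest).drop 1).take (i+1)) (by omega)
            (by omega) ((hnb.drop 1).take (i+1))
            (by
              rw [gcongr'' (show (((u :: v :: rest).drop 1).take (i+1)).length - 1 = i by omega),
                List.getElem_take, List.getElem_drop, List.getElem_take, List.getElem_drop,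
                gcongr'' (show 1 + i = i + 1 by omega), hx]
              simp)
          exact ⟨x, c, hc, by omega⟩
    · refine ⟨u, SimpleGraph.Walk.cons hadj0 p.bypass, ?_, ?_⟩
      · rw [SimpleGraph.Walk.cons_isCycle_iff]
        exact ⟨p.bypass_isPath, hA⟩
      · have h1 : p.bypass.length ≤ p.length := SimpleGraph.Walk.length_bypass_le p
        simp only [SimpleGraph.Walk.length_cons, List.length_cons]
        omega


/-- Two distinct non-backtracking chains with the same endpoints give a short cycle. -/
lemma twoChains : ∀ (k' : ℕ), 1 ≤ k' → ∀ (L L' : List W),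
    (hL : L.length = k'+1) → (hL' : L'.length = k'+1) → NBC H L → NBC H L' →
    (L[0]'(by omega) = L'[0]'(by omega)) → (L[k']'(by omega) = L'[k']'(by omega)) →
    L ≠ L' →
    ∃ (x : W) (c : H.Walk x x), c.IsCycle ∧ c.length ≤ 2*k' := by
  intro k'
  induction k' with
  | zero => omega
  | succ m ih =>
    intro _ L L' hL hL' hnb hnb' hhead hlast hne
    rcases Nat.eq_zero_or_pos m with rfl | hm
    · exfalso
      apply hne
      apply List.ext_getElem (by omega)
      intro i h1 h2
      have : i < 2 := by omega
      interval_cases i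
      · exact hhead
      · exact hlast
    · by_cases hsec : L[1]'(by omega) = L'[1]'(by omega)
      · -- peel the first edge
        obtain ⟨x, c, hc, hcl⟩ := ih hm (L.drop 1) (L'.drop 1)
          (by simp [hL]) (by simp [hL'])
          (hnb.drop 1) (hnb'.drop 1)
          (by
            rw [List.getElem_drop, List.getElem_drop]
            exact (gcongr'' (show (1:ℕ)+0 = 1 by omega) _).trans
              (hsec.trans (gcongr'' (show (1:ℕ) = 1+0 by omega) _)))
          (by
            rw [List.getElem_drop, List.getElem_drop]
            exact (gcongr'' (show 1+m = m+1 by omega) _).trans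
              (hlast.trans (gcongr'' (show m+1 = 1+m by omega) _)))
          (by
            intro hdeq
            apply hne
            apply List.ext_getElem (by omega)
            intro i hi1 hi2
            cases i with
            | zero => exact hhead
            | succ j =>
              have e := congrArg (fun t : List W => t[j]?) hdeq
              simp only [List.getElem?_drop] at e
              rw [List.getElem?_eq_getElem (by omega), List.getElem?_eq_getElem (by omega)] at e
              have e' := Option.some.inj e
              exact (gcongr'' (show j+1 = 1+j by omega) _).trans
                (e'.trans (gcongr'' (show 1+j = j+1 by omega) _)))
        exact ⟨x, c, hc, by omega⟩
      · -- form the closed chain L.reverse ++ L'.drop 1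
        have hlenA : L.reverse.length = m + 2 := by simp [hL]
        have hlenB : (L'.drop 1).length = m + 1 := by simp [hL']
        have hlenC : (L.reverse ++ L'.drop 1).length = 2*m + 3 := by simp [hL, hL']; omega
        have hnbC : NBC H (L.reverse ++ L'.drop 1) := by
          refine NBC.append hnb.reverse (hnb'.drop 1) (by omega) (by omega) ?_ ?_ ?_
          · rw [List.getElem_reverse, List.getElem_drop]
            have h0 : H.Adj (L'[0]'(by omega)) (L'[0+1]'(by omega)) := hnb'.1 0 (by omega)
            have e1 : L.length - 1 - (L.reverse.length - 1) = 0 := by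
              simp [hL]
            rw [gcongr'' e1]
            rw [hhead]
            exact (gcongr'' (show (0:ℕ) = 0+0 by omega) _) ▸ h0
          · rw [List.getElem_reverse, List.getElem_drop]
            have e1 : L.length - 1 - (L.reverse.length - 2) = 1 := by
              simp [hL]
            rw [gcongr'' e1]
            intro hx
            exact hsec (hx.trans (gcongr'' (show (1:ℕ)+0 = 1 by omega) _))
          · intro hb1
            rw [List.getElem_reverse, List.getElem_drop]
            have e1 : L.length - 1 - (L.reverse.length - 1) = 0 := by simp [hL]
            rw [gcongr'' e1, hhead]
            have := hnb'.2 0 (by omega)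
            intro hx
            exact this ((gcongr'' (show (0:ℕ)+2 = 1+1 by omega) _).symm.trans hx.symm)
        have hclC : (L.reverse ++ L'.drop 1)[0]'(by omega) =
            (L.reverse ++ L'.drop 1)[(L.reverse ++ L'.drop 1).length - 1]'(by omega) := by
          rw [gcongr'' (show (L.reverse ++ L'.drop 1).length - 1 = 2*m+2 by omega)]
          rw [List.getElem_append_left (show 0 < L.reverse.length by omega),
            List.getElem_append_right (show L.reverse.length ≤ 2*m+2 by omega)]
          rw [List.getElem_reverse, List.getElem_drop]
          have e1 : L.length - 1 - 0 = m + 1 := by simp [hL]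
          rw [gcongr'' e1]
          refine hlast.trans ?_
          exact gcongr'' (by omega) _
        obtain ⟨x, c, hc, hcl⟩ := claimP (L.reverse ++ L'.drop 1).length _ le_rfl (by omega) hnbC hclC
        exact ⟨x, c, hc, by omega⟩


section Core

variable [Fintype W] [DecidableEq W] (H : SimpleGraph W) [DecidableRel H.Adj]

/-- Directed edges. -/
def DD : Finset (W × W) := Finset.univ.filter (fun e => H.Adj e.1 e.2)

lemma mem_DD {e : W × W} : e ∈ DD H ↔ H.Adj e.1 e.2 := by simp [DD]

/-- Directed edges that can follow `e` in a non-backtracking walk. -/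
def succe (e : W × W) : Finset (W × W) := (DD H).filter (fun f => f.1 = e.2 ∧ f.2 ≠ e.1)

/-- Directed edges that `f` can follow. -/
def prede (f : W × W) : Finset (W × W) := (DD H).filter (fun e => f.1 = e.2 ∧ f.2 ≠ e.1)

lemma card_succe {e : W × W} (he : e ∈ DD H) : (succe H e).card + 1 = H.degree e.2 := by
  have himg : succe H e = ((H.neighborFinset e.2).erase e.1).image (fun w => (e.2, w)) := by
    ext f
    simp only [succe, Finset.mem_filter, mem_DD, Finset.mem_image, Finset.mem_erase,
      SimpleGraph.mem_neighborFinset]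
    constructor
    · rintro ⟨hadj, h1, h2⟩
      exact ⟨f.2, ⟨h2, h1 ▸ hadj⟩, by rw [← h1]⟩
    · rintro ⟨w, ⟨hw1, hw2⟩, rfl⟩
      exact ⟨hw2, rfl, hw1⟩
  rw [himg, Finset.card_image_of_injective _ (fun a b h => (Prod.mk.injEq _ _ _ _).mp h |>.2),
    Finset.card_erase_of_mem (by rw [SimpleGraph.mem_neighborFinset]; exact ((mem_DD H).mp he).symm),
    SimpleGraph.card_neighborFinset_eq_degree]
  have : 1 ≤ H.degree e.2 := by
    rw [← SimpleGraph.card_neighborFinset_eq_degree]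
    refine Finset.card_pos.mpr ⟨e.1, ?_⟩
    rw [SimpleGraph.mem_neighborFinset]
    exact ((mem_DD H).mp he).symm
  omega

lemma card_prede {f : W × W} (hf : f ∈ DD H) : (prede H f).card + 1 = H.degree f.1 := by
  have himg : prede H f = ((H.neighborFinset f.1).erase f.2).image (fun w => (w, f.1)) := by
    ext e
    simp only [prede, Finset.mem_filter, mem_DD, Finset.mem_image, Finset.mem_erase,
      SimpleGraph.mem_neighborFinset]
    constructor
    · rintro ⟨hadj, h1, h2⟩
      exact ⟨e.1, ⟨fun hx => h2 hx.symm, by rw [← h1] at hadj; exact hadj.symm⟩, by rw [h1]⟩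
    · rintro ⟨w, ⟨hw1, hw2⟩, rfl⟩
      exact ⟨hw2.symm, rfl, fun hx => hw1 hx.symm⟩
  rw [himg, Finset.card_image_of_injective _ (fun a b h => (Prod.mk.injEq _ _ _ _).mp h |>.1),
    Finset.card_erase_of_mem (by rw [SimpleGraph.mem_neighborFinset]; exact (mem_DD H).mp hf),
    SimpleGraph.card_neighborFinset_eq_degree]
  have : 1 ≤ H.degree f.1 := by
    rw [← SimpleGraph.card_neighborFinset_eq_degree]
    refine Finset.card_pos.mpr ⟨f.2, ?_⟩
    rw [SimpleGraph.mem_neighborFinset]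
    exact (mem_DD H).mp hf
  omega

/-- Tails of non-backtracking walks starting with a given directed edge. -/
def T : ℕ → (W × W) → Finset (List W)
  | 0, _ => {[]}
  | (j+1), e => (succe H e).biUnion (fun f => (T j f).image (fun l => f.2 :: l))

lemma T_card (j : ℕ) (e : W × W) :
    (T H (j+1) e).card = ∑ f ∈ succe H e, (T H j f).card := by
  rw [T, Finset.card_biUnion]
  · exact Finset.sum_congr rfl
      (fun f _ => Finset.card_image_of_injective _ (fun a b h => (List.cons.injEq _ _ _ _).mp h |>.2))
  · intro f hf f' hf' hne
    rw [succe, Finset.mem_coe, Finset.mem_filter] at hf hf'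
    refine Finset.disjoint_left.mpr ?_
    intro l hl hl'
    simp only [Finset.mem_image] at hl hl'
    obtain ⟨a, _, rfl⟩ := hl
    obtain ⟨b, _, hb⟩ := hl'
    have h2 : f'.2 = f.2 := ((List.cons.injEq _ _ _ _).mp hb).1
    exact hne (Prod.ext (hf.2.1.trans hf'.2.1.symm) h2.symm)

lemma T_len (j : ℕ) (e : W × W) {l : List W} (hl : l ∈ T H j e) : l.length = j := by
  induction j generalizing e l with
  | zero => simp [T] at hl; simp [hl]
  | succ j ih =>
    rw [T, Finset.mem_biUnion] at hl
    obtain ⟨f, hf, hl⟩ := hl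
    rw [Finset.mem_image] at hl
    obtain ⟨l', hl', rfl⟩ := hl
    simp [ih f hl']

lemma NBC.cons2 {a b : W} {M : List W} (hadj : H.Adj a b) (h : NBC H (b :: M))
    (hne : ∀ (hM : 0 < M.length), a ≠ M[0]'hM) : NBC H (a :: b :: M) := by
  refine ⟨fun i hi => ?_, fun i hi => ?_⟩
  · cases i with
    | zero => simpa using hadj
    | succ i' =>
      have := h.1 i' (by simp at hi ⊢; omega)
      simpa using this
  · cases i with
    | zero =>
      have : 0 < M.length := by simp at hi; omega
      simpa using (hne this).symm
    | succ i' =>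
      have := h.2 i' (by simp at hi ⊢; omega)
      simpa using this

lemma T_nb (j : ℕ) (e : W × W) (he : e ∈ DD H) {l : List W} (hl : l ∈ T H j e) :
    NBC H (e.1 :: e.2 :: l) := by
  induction j generalizing e l with
  | zero =>
    simp only [T, Finset.mem_singleton] at hl
    subst hl
    refine ⟨fun i hi => ?_, fun i hi => ?_⟩
    · simp only [List.length_cons, List.length_nil] at hi
      have : i = 0 := by omega
      subst this
      simpa using (mem_DD H).mp he
    · simp at hi
  | succ j ih =>
    rw [T, Finset.mem_biUnion] at hl
    obtain ⟨f, hf, hl⟩ := hl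
    rw [Finset.mem_image] at hl
    obtain ⟨l', hl', rfl⟩ := hl
    have hfD : f ∈ DD H := (Finset.mem_filter.mp hf).1
    have hf2 := (Finset.mem_filter.mp hf).2
    have hnb' := ih f hfD hl'
    rw [hf2.1] at hnb'
    exact NBC.cons2 H ((mem_DD H).mp he) hnb' (fun _ hx => hf2.2 (Eq.symm (by simpa using hx)))


/-- Finite Jensen for `exp`: `|s| · exp(avg) ≤ ∑ exp`. -/
lemma card_mul_exp_avg_le {α : Type*} (s : Finset α) (hs : s.Nonempty) (a : α → ℝ) :
    (s.card : ℝ) * Real.exp ((∑ i ∈ s, a i) / s.card) ≤ ∑ i ∈ s, Real.exp (a i) := by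
  have hc : (0:ℝ) < s.card := by exact_mod_cast Finset.card_pos.mpr hs
  have key := Real.geom_mean_le_arith_mean_weighted s (fun _ => (s.card : ℝ)⁻¹)
    (fun i => Real.exp (a i)) (fun i _ => by positivity)
    (by rw [Finset.sum_const, nsmul_eq_mul]; field_simp) (fun i _ => (Real.exp_pos _).le)
  have hL : ∏ i ∈ s, Real.exp (a i) ^ ((s.card : ℝ)⁻¹) =
      Real.exp ((∑ i ∈ s, a i) / s.card) := by
    rw [Finset.prod_congr rfl (fun i (_ : i ∈ s) => (Real.exp_mul (a i) ((s.card : ℝ)⁻¹)).symm),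
      ← Real.exp_sum, ← Finset.sum_mul, div_eq_mul_inv]
  have hR : ∑ i ∈ s, (s.card : ℝ)⁻¹ * Real.exp (a i) =
      (s.card : ℝ)⁻¹ * ∑ i ∈ s, Real.exp (a i) := by rw [Finset.mul_sum]
  rw [hL, hR] at key
  calc (s.card : ℝ) * Real.exp ((∑ i ∈ s, a i) / s.card)
      ≤ (s.card : ℝ) * ((s.card : ℝ)⁻¹ * ∑ i ∈ s, Real.exp (a i)) :=
        mul_le_mul_of_nonneg_left key hc.le
    _ = ∑ i ∈ s, Real.exp (a i) := by field_simp

variable [Fintype W] [DecidableEq W] (H : SimpleGraph W) [DecidableRel H.Adj]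

/-- The entropy potential. -/
noncomputable def lf : ℕ → (W × W) → ℝ
  | 0 => fun _ => 0
  | (j+1) => fun e => Real.log ((H.degree e.2 : ℝ) - 1) +
      (∑ f ∈ succe H e, lf j f) / ((H.degree e.2 : ℝ) - 1)

lemma exp_lf_le (hd2 : ∀ w, 2 ≤ H.degree w) (j : ℕ) :
    ∀ e ∈ DD H, Real.exp (lf H j e) ≤ ((T H j e).card : ℝ) := by
  induction j with
  | zero => intro e _; simp [lf, T]
  | succ j ih =>
    intro e he
    have hq1 : (1:ℝ) ≤ (H.degree e.2 : ℝ) - 1 := by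
      have h2 := hd2 e.2
      have : (2:ℝ) ≤ (H.degree e.2 : ℝ) := by exact_mod_cast h2
      linarith
    have hq0 : (0:ℝ) < (H.degree e.2 : ℝ) - 1 := by linarith
    have hcard : ((succe H e).card : ℝ) = (H.degree e.2 : ℝ) - 1 := by
      have := card_succe H he
      push_cast [← this]
      ring
    have hne : (succe H e).Nonempty := by
      rw [← Finset.card_pos]
      have h1 := card_succe H he
      have h2 := hd2 e.2
      omega
    have step1 : Real.exp (lf H (j+1) e) =
        ((H.degree e.2 : ℝ) - 1) *
          Real.exp ((∑ f ∈ succe H e, lf H j f) / ((H.degree e.2 : ℝ) - 1)) := by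
      simp only [lf]
      rw [Real.exp_add, Real.exp_log hq0]
    rw [step1, ← hcard]
    calc ((succe H e).card : ℝ) *
          Real.exp ((∑ f ∈ succe H e, lf H j f) / ((succe H e).card : ℝ)) ≤
        ∑ f ∈ succe H e, Real.exp (lf H j f) := card_mul_exp_avg_le (succe H e) hne (lf H j)
      _ ≤ ∑ f ∈ succe H e, ((T H j f).card : ℝ) := by
          refine Finset.sum_le_sum (fun f hf => ih f ?_)
          exact (Finset.mem_filter.mp hf).1
      _ = ((T H (j+1) e).card : ℝ) := by
          rw [T_card]
          push_cast
          rfl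

lemma sum_lf (hd2 : ∀ w, 2 ≤ H.degree w) (j : ℕ) :
    ∑ e ∈ DD H, lf H j e = j * ∑ e ∈ DD H, Real.log ((H.degree e.2 : ℝ) - 1) := by
  induction j with
  | zero => simp [lf]
  | succ j ih =>
    have key : ∑ e ∈ DD H, (∑ f ∈ succe H e, lf H j f) / ((H.degree e.2 : ℝ) - 1) =
        ∑ f ∈ DD H, lf H j f := by
      have e1 : ∀ e ∈ DD H, (∑ f ∈ succe H e, lf H j f) / ((H.degree e.2 : ℝ) - 1) =
          ∑ f ∈ DD H, (if f.1 = e.2 ∧ f.2 ≠ e.1 then lf H j f / ((H.degree e.2 : ℝ) - 1) else 0) := by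
        intro e _
        rw [Finset.sum_div]
        rw [succe, Finset.sum_filter]
      rw [Finset.sum_congr rfl e1, Finset.sum_comm]
      refine Finset.sum_congr rfl (fun f hf => ?_)
      have e2 : ∀ e ∈ DD H, (if f.1 = e.2 ∧ f.2 ≠ e.1 then lf H j f / ((H.degree e.2 : ℝ) - 1) else 0) =
          (if f.1 = e.2 ∧ f.2 ≠ e.1 then lf H j f / ((H.degree f.1 : ℝ) - 1) else 0) := by
        intro e _
        split_ifs with h
        · rw [h.1]
        · rfl
      rw [Finset.sum_congr rfl e2, ← Finset.sum_filter, ← prede, Finset.sum_const]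
      have hq0 : ((H.degree f.1 : ℝ) - 1) ≠ 0 := by
        have h2 := hd2 f.1
        have : (2:ℝ) ≤ (H.degree f.1 : ℝ) := by exact_mod_cast h2
        linarith
      have hcard : ((prede H f).card : ℝ) = (H.degree f.1 : ℝ) - 1 := by
        have := card_prede H hf
        push_cast [← this]
        ring
      rw [nsmul_eq_mul, hcard]
      field_simp
    simp only [lf]
    rw [Finset.sum_add_distrib, key, ih]
    push_cast
    ring


lemma fiber2_card (v : W) : ((DD H).filter (fun e => e.2 = v)).card = H.degree v := by
  have himg : (DD H).filter (fun e => e.2 = v) = (H.neighborFinset v).image (fun w => (w, v)) := by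
    ext e
    simp only [Finset.mem_filter, mem_DD, Finset.mem_image, SimpleGraph.mem_neighborFinset]
    constructor
    · rintro ⟨hadj, h2⟩
      exact ⟨e.1, by rw [h2] at hadj; exact hadj.symm, by rw [← h2]⟩
    · rintro ⟨w, hw, rfl⟩
      exact ⟨hw.symm, rfl⟩
  rw [himg, Finset.card_image_of_injective _ (fun a b h => (Prod.mk.injEq _ _ _ _).mp h |>.1),
    SimpleGraph.card_neighborFinset_eq_degree]

lemma sum_over_DD (g : W → ℝ) : ∑ e ∈ DD H, g e.2 = ∑ v, (H.degree v : ℝ) * g v := by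
  rw [← Finset.sum_fiberwise_of_maps_to (fun e (_ : e ∈ DD H) => Finset.mem_univ e.2)
    (fun e => g e.2)]
  refine Finset.sum_congr rfl (fun v _ => ?_)
  have : ∀ e ∈ (DD H).filter (fun e => e.2 = v), g e.2 = g v := by
    intro e he
    rw [(Finset.mem_filter.mp he).2]
  rw [Finset.sum_congr rfl this, Finset.sum_const, fiber2_card, nsmul_eq_mul]

lemma card_DD_R : ((DD H).card : ℝ) = ∑ v, (H.degree v : ℝ) := by
  have := sum_over_DD H (fun _ => (1:ℝ))
  simpa using this

lemma phi_convex : ConvexOn ℝ (Set.Ici (2:ℝ)) (fun x => x * Real.log (x - 1)) := by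
  have h1sub : Set.Ici (2:ℝ) ⊆ Set.Ioi 1 := fun x hx => by
    simp only [Set.mem_Ici] at hx; simp only [Set.mem_Ioi]; linarith
  have hderiv : ∀ x ∈ Set.Ioi (1:ℝ), HasDerivAt (fun x => x * Real.log (x - 1))
      (Real.log (x - 1) + x * (x - 1)⁻¹) x := by
    intro x hx
    simp only [Set.mem_Ioi] at hx
    have hx0 : x - 1 ≠ 0 := by linarith
    have h1 : HasDerivAt (fun x : ℝ => x - 1) 1 x := (hasDerivAt_id x).sub_const 1
    have h2 : HasDerivAt (fun x : ℝ => Real.log (x - 1)) ((x-1)⁻¹) x := by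
      have := (Real.hasDerivAt_log hx0).comp x h1
      simpa [Function.comp_def] using this
    have h := (hasDerivAt_id x).mul h2
    simp only [id_eq, one_mul] at h
    exact h
    try ring
  have hderiv2 : ∀ x ∈ Set.Ioi (1:ℝ), HasDerivAt (fun x => Real.log (x - 1) + x * (x - 1)⁻¹)
      ((x-1)⁻¹ + ((x - 1) - x) / (x-1)^2) x := by
    intro x hx
    simp only [Set.mem_Ioi] at hx
    have hx0 : x - 1 ≠ 0 := by linarith
    have h1 : HasDerivAt (fun x : ℝ => x - 1) 1 x := (hasDerivAt_id x).sub_const 1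
    have h2 : HasDerivAt (fun x : ℝ => Real.log (x - 1)) ((x-1)⁻¹) x := by
      have := (Real.hasDerivAt_log hx0).comp x h1
      simpa [Function.comp_def] using this
    have h3 : HasDerivAt (fun x : ℝ => x / (x - 1)) ((1 * (x-1) - x * 1) / (x-1)^2) x :=
      (hasDerivAt_id x).div h1 hx0
    have := h2.add h3
    have hE : ((fun x : ℝ => Real.log (x - 1)) + fun x : ℝ => x / (x - 1)) =
        (fun x : ℝ => Real.log (x - 1) + x * (x - 1)⁻¹) := by
      funext y; simp only [Pi.add_apply, div_eq_mul_inv]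
    rw [hE] at this
    convert this using 1
    exacts [rfl, rfl, by ring]
  have hEqOn : Set.EqOn (deriv (fun x => x * Real.log (x - 1)))
      (fun x => Real.log (x - 1) + x * (x - 1)⁻¹) (Set.Ioi 1) :=
    fun x hx => (hderiv x hx).deriv
  apply convexOn_of_deriv2_nonneg (convex_Ici 2)
  · intro x hx
    exact ((hderiv x (h1sub hx)).differentiableAt).continuousAt.continuousWithinAt
  · rw [interior_Ici]
    intro x hx
    have hx1 : x ∈ Set.Ioi (1:ℝ) := by
      simp only [Set.mem_Ioi] at hx ⊢; linarith
    exact ((hderiv x hx1).differentiableAt).differentiableWithinAt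
  · rw [interior_Ici]
    intro x hx
    have hx1 : x ∈ Set.Ioi (1:ℝ) := by
      simp only [Set.mem_Ioi] at hx ⊢; linarith
    have : DifferentiableAt ℝ (fun x => Real.log (x - 1) + x * (x - 1)⁻¹) x :=
      (hderiv2 x hx1).differentiableAt
    refine (this.congr_of_eventuallyEq ?_).differentiableWithinAt
    exact Filter.eventuallyEq_of_mem (isOpen_Ioi.mem_nhds hx1) hEqOn
  · rw [interior_Ici]
    intro x hx
    have hx1 : x ∈ Set.Ioi (1:ℝ) := by
      simp only [Set.mem_Ioi] at hx ⊢; linarith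
    simp only [Set.mem_Ioi] at hx hx1
    have hd1 : deriv (deriv (fun x => x * Real.log (x - 1))) x =
        deriv (fun x => Real.log (x - 1) + x * (x - 1)⁻¹) x := by
      apply Filter.EventuallyEq.deriv_eq
      exact Filter.eventuallyEq_of_mem (isOpen_Ioi.mem_nhds (by simpa using hx1)) hEqOn
    have hd2 : deriv (fun x => Real.log (x - 1) + x * (x - 1)⁻¹) x =
        (x-1)⁻¹ + ((x - 1) - x) / (x-1)^2 := (hderiv2 x (by simpa using hx1)).deriv
    show 0 ≤ deriv^[2] (fun x => x * Real.log (x - 1)) x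
    rw [Function.iterate_succ, Function.iterate_one, Function.comp_apply, hd1, hd2]
    have hx0 : (0:ℝ) < x - 1 := by linarith
    have : ((x - 1) - x) / (x-1)^2 = -(1 / (x-1)^2) := by
      field_simp
      ring
    rw [this]
    have h1 : 1 / (x-1)^2 ≤ (x-1)⁻¹ := by
      rw [inv_eq_one_div, div_le_div_iff₀ (by positivity) hx0]
      nlinarith
    linarith


lemma CC_ge [Nonempty W] (hd2 : ∀ w, 2 ≤ H.degree w) :
    (∑ v, (H.degree v : ℝ)) *
      Real.log ((∑ v, (H.degree v : ℝ)) / (Fintype.card W : ℝ) - 1) ≤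
      ∑ v, (H.degree v : ℝ) * Real.log ((H.degree v : ℝ) - 1) := by
  set nR : ℝ := (Fintype.card W : ℝ) with hnR
  have hn0 : (0:ℝ) < nR := by
    rw [hnR]
    exact_mod_cast Fintype.card_pos
  have key := phi_convex.map_sum_le (t := Finset.univ) (w := fun _ => nR⁻¹)
    (p := fun v => (H.degree v : ℝ)) (fun _ _ => by positivity)
    (by rw [Finset.sum_const, nsmul_eq_mul, Finset.card_univ]; field_simp; exact hnR.symm)
    (fun v _ => by
      simp only [Set.mem_Ici]
      exact_mod_cast hd2 v)
  simp only [smul_eq_mul] at key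
  have hsum : ∑ v : W, nR⁻¹ * (H.degree v : ℝ) = (∑ v, (H.degree v : ℝ)) / nR := by
    rw [← Finset.mul_sum]; ring
  rw [hsum] at key
  have hmul := mul_le_mul_of_nonneg_left key hn0.le
  calc (∑ v, (H.degree v : ℝ)) * Real.log ((∑ v, (H.degree v : ℝ)) / nR - 1)
      = nR * (((∑ v, (H.degree v : ℝ)) / nR) * Real.log ((∑ v, (H.degree v : ℝ)) / nR - 1)) := by
        field_simp
    _ ≤ nR * (∑ v : W, nR⁻¹ * ((H.degree v : ℝ) * Real.log ((H.degree v : ℝ) - 1))) := hmul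
    _ = ∑ v, (H.degree v : ℝ) * Real.log ((H.degree v : ℝ) - 1) := by
        rw [← Finset.mul_sum]
        field_simp

lemma upper_bound (k : ℕ) (hk : 1 ≤ k)
    (hcyc : ∀ (x : W) (w : H.Walk x x), w.IsCycle → ¬ w.length ≤ 2 * k) :
    ∑ e ∈ DD H, (T H (k-1) e).card ≤ Fintype.card W * Fintype.card W := by
  classical
  rw [← Finset.card_sigma]
  have hmain : ((DD H).sigma (T H (k-1))).card ≤ (Finset.univ : Finset (W × W)).card := by
    apply Finset.card_le_card_of_injOn
      (fun p => (p.1.1, (p.1.1 :: p.1.2 :: p.2).getLast (by simp)))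
      (fun _ _ => Finset.mem_univ _)
    rintro ⟨⟨a, b⟩, l⟩ hp ⟨⟨a', b'⟩, l'⟩ hq heq
    simp only [Finset.coe_sigma, Set.mem_sigma_iff, Finset.mem_coe] at hp hq
    have hpD : (a, b) ∈ DD H := hp.1
    have hqD : (a', b') ∈ DD H := hq.1
    have hpT := hp.2
    have hqT := hq.2
    have hplen : l.length = k - 1 := T_len H (k-1) _ hpT
    have hqlen : l'.length = k - 1 := T_len H (k-1) _ hqT
    have hL : (a :: b :: l).length = k + 1 := by simp [hplen]; omega
    have hL' : (a' :: b' :: l').length = k + 1 := by simp [hqlen]; omega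
    have heq1 : a = a' := (Prod.mk.injEq _ _ _ _).mp heq |>.1
    have heq2 : (a :: b :: l).getLast (by simp) = (a' :: b' :: l').getLast (by simp) :=
      (Prod.mk.injEq _ _ _ _).mp heq |>.2
    by_contra hne
    have hLne : (a :: b :: l) ≠ (a' :: b' :: l') := by
      intro hx
      apply hne
      obtain ⟨h1, h2, h3⟩ : a = a' ∧ b = b' ∧ l = l' := by
        have e1 := (List.cons.injEq _ _ _ _).mp hx
        have e2 := (List.cons.injEq _ _ _ _).mp e1.2
        exact ⟨e1.1, e2.1, e2.2⟩
      subst h1; subst h2; subst h3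
      rfl
    obtain ⟨x, c, hc, hclen⟩ := twoChains k hk (a :: b :: l) (a' :: b' :: l') hL hL'
      (T_nb H (k-1) _ hpD hpT) (T_nb H (k-1) _ hqD hqT)
      (by simpa using heq1)
      (by
        have g1 := List.getLast_eq_getElem (l := a :: b :: l) (by simp)
        have g2 := List.getLast_eq_getElem (l := a' :: b' :: l') (by simp)
        rw [g1, g2] at heq2
        refine Eq.trans ?_ (heq2.trans ?_)
        · exact gcongr'' (by omega) _
        · exact gcongr'' (by omega) _)
      hLne
    exact hcyc x c hc (by omega)
  calc ((DD H).sigma (T H (k-1))).card ≤ (Finset.univ : Finset (W × W)).card := hmain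
    _ = Fintype.card W * Fintype.card W := by
      rw [Finset.card_univ, Fintype.card_prod]

/-- Core quantitative bound for graphs with minimum degree at least 2. -/
theorem core_bound [Nonempty W] (hd2 : ∀ w, 2 ≤ H.degree w) (k : ℕ) (hk : 1 ≤ k) (c : ℝ)
    (hc2 : 2 ≤ c) (havg : c * (Fintype.card W : ℝ) ≤ ∑ v, (H.degree v : ℝ))
    (hcyc : ∀ (x : W) (w : H.Walk x x), w.IsCycle → ¬ w.length ≤ 2 * k) :
    c * (c - 1) ^ (k - 1) ≤ (Fintype.card W : ℝ) := by
  classical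
  set nR : ℝ := (Fintype.card W : ℝ) with hnR
  set M2 : ℝ := ∑ v, (H.degree v : ℝ) with hM2def
  have hn0 : (0:ℝ) < nR := by rw [hnR]; exact_mod_cast Fintype.card_pos
  have hM2 : c * nR ≤ M2 := havg
  have hM2pos : (0:ℝ) < M2 := lt_of_lt_of_le (by positivity) hM2
  have hdbar : 2 ≤ M2 / nR := by
    rw [le_div_iff₀ hn0]
    calc (2:ℝ) * nR ≤ c * nR := mul_le_mul_of_nonneg_right hc2 hn0.le
      _ ≤ M2 := hM2
  have hdbar1 : (0:ℝ) < M2 / nR - 1 := by linarith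
  have hDDne : (DD H).Nonempty := by
    obtain ⟨w⟩ := ‹Nonempty W›
    have h2 := hd2 w
    have : 0 < H.degree w := by omega
    rw [← SimpleGraph.card_neighborFinset_eq_degree] at this
    obtain ⟨u, hu⟩ := Finset.card_pos.mp this
    exact ⟨(w, u), (mem_DD H).mpr (by rwa [SimpleGraph.mem_neighborFinset] at hu)⟩
  have hcardDD : ((DD H).card : ℝ) = M2 := card_DD_R H
  -- the logarithmic bound
  have hCC : M2 * Real.log (M2 / nR - 1) ≤ ∑ e ∈ DD H, Real.log ((H.degree e.2 : ℝ) - 1) := by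
    rw [sum_over_DD H (fun v => Real.log ((H.degree v : ℝ) - 1))]
    exact CC_ge H hd2
  have lower : M2 * (M2 / nR - 1) ^ (k - 1) ≤ ∑ e ∈ DD H, ((T H (k-1) e).card : ℝ) := by
    calc M2 * (M2 / nR - 1) ^ (k - 1)
        = ((DD H).card : ℝ) * Real.exp (((k-1 : ℕ) : ℝ) * Real.log (M2 / nR - 1)) := by
          rw [hcardDD, Real.exp_nat_mul, Real.exp_log hdbar1]
      _ ≤ ((DD H).card : ℝ) * Real.exp ((∑ e ∈ DD H, lf H (k-1) e) / ((DD H).card : ℝ)) := by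
          refine mul_le_mul_of_nonneg_left (Real.exp_le_exp.mpr ?_) (by positivity)
          rw [sum_lf H hd2 (k-1), hcardDD]
          rw [mul_div_assoc]
          refine mul_le_mul_of_nonneg_left ?_ (by positivity)
          rw [le_div_iff₀ hM2pos, mul_comm]
          exact hCC
      _ ≤ ∑ e ∈ DD H, Real.exp (lf H (k-1) e) := card_mul_exp_avg_le (DD H) hDDne _
      _ ≤ ∑ e ∈ DD H, ((T H (k-1) e).card : ℝ) :=
          Finset.sum_le_sum (fun e he => exp_lf_le H hd2 (k-1) e he)
  have upperR : ∑ e ∈ DD H, ((T H (k-1) e).card : ℝ) ≤ nR * nR := by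
    have := upper_bound H k hk hcyc
    rw [hnR]
    push_cast
    exact_mod_cast this
  have key : (M2 / nR) * (M2 / nR - 1) ^ (k - 1) ≤ nR := by
    rw [div_mul_eq_mul_div, div_le_iff₀ hn0]
    exact le_trans lower upperR
  have hcle : c ≤ M2 / nR := by rw [le_div_iff₀ hn0]; exact hM2
  calc c * (c - 1) ^ (k - 1)
      ≤ (M2 / nR) * (M2 / nR - 1) ^ (k - 1) := by
        refine mul_le_mul hcle (pow_le_pow_left₀ (by linarith) (by linarith) _)
          (pow_nonneg (by linarith) _) (by linarith)
    _ ≤ nR := key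

end Core


section Reduction

variable {V : Type*} [Fintype V] [DecidableEq V] (G : SimpleGraph V) [DecidableRel G.Adj]

/-- Ordered adjacent pairs inside `s`. -/
def PP (s : Finset V) : Finset (V × V) := (s ×ˢ s).filter (fun p => G.Adj p.1 p.2)

/-- Degree within `s`. -/
def degIn (s : Finset V) (v : V) : ℕ := (G.neighborFinset v ∩ s).card

lemma cardPP_filter1 {s : Finset V} {v : V} (hv : v ∈ s) :
    ((PP G s).filter (fun p => p.1 = v)).card = degIn G s v := by
  have himg : (PP G s).filter (fun p => p.1 = v) =
      (G.neighborFinset v ∩ s).image (fun w => (v, w)) := by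
    ext ⟨p1, p2⟩
    simp only [PP, Finset.mem_filter, Finset.mem_product, Finset.mem_image, Finset.mem_inter,
      SimpleGraph.mem_neighborFinset, Prod.mk.injEq]
    constructor
    · rintro ⟨⟨⟨h1, h2⟩, hadj⟩, rfl⟩
      exact ⟨p2, ⟨hadj, h2⟩, rfl, rfl⟩
    · rintro ⟨w, ⟨hw1, hw2⟩, rfl, rfl⟩
      exact ⟨⟨⟨hv, hw2⟩, hw1⟩, rfl⟩
  rw [himg, Finset.card_image_of_injective _ (fun a b h => (Prod.mk.injEq _ _ _ _).mp h |>.2)]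
  rfl

lemma cardPP_filter2 {s : Finset V} {v : V} (hv : v ∈ s) :
    ((PP G s).filter (fun p => p.2 = v)).card = degIn G s v := by
  have himg : (PP G s).filter (fun p => p.2 = v) =
      (G.neighborFinset v ∩ s).image (fun w => (w, v)) := by
    ext ⟨p1, p2⟩
    simp only [PP, Finset.mem_filter, Finset.mem_product, Finset.mem_image, Finset.mem_inter,
      SimpleGraph.mem_neighborFinset, Prod.mk.injEq]
    constructor
    · rintro ⟨⟨⟨h1, h2⟩, hadj⟩, rfl⟩
      exact ⟨p1, ⟨hadj.symm, h1⟩, rfl, rfl⟩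
    · rintro ⟨w, ⟨hw1, hw2⟩, rfl, rfl⟩
      exact ⟨⟨⟨hw2, hv⟩, hw1.symm⟩, rfl⟩
  rw [himg, Finset.card_image_of_injective _ (fun a b h => (Prod.mk.injEq _ _ _ _).mp h |>.1)]
  rfl

lemma PP_erase {s : Finset V} {v : V} (hv : v ∈ s) :
    (PP G (s.erase v)).card + 2 * degIn G s v = (PP G s).card := by
  have hsub : PP G (s.erase v) = (PP G s).filter (fun p => ¬(p.1 = v ∨ p.2 = v)) := by
    ext p
    simp only [PP, Finset.mem_filter, Finset.mem_product, Finset.mem_erase, not_or]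
    tauto
  have hsplit := Finset.card_filter_add_card_filter_not
    (s := PP G s) (p := fun p => (p.1 = v ∨ p.2 = v))
  have hdisj : Disjoint ((PP G s).filter (fun p => p.1 = v))
      ((PP G s).filter (fun p => p.2 = v)) := by
    rw [Finset.disjoint_left]
    intro p hp1 hp2
    have h1 := (Finset.mem_filter.mp hp1).2
    have h2 := (Finset.mem_filter.mp hp2).2
    have hadj := (Finset.mem_filter.mp (Finset.mem_filter.mp hp1).1).2
    rw [h1, h2] at hadj
    exact G.irrefl hadj
  have hor : (PP G s).filter (fun p => p.1 = v ∨ p.2 = v) =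
      ((PP G s).filter (fun p => p.1 = v)) ∪ ((PP G s).filter (fun p => p.2 = v)) :=
    Finset.filter_or _ _ _
  have hcard2 : ((PP G s).filter (fun p => p.1 = v ∨ p.2 = v)).card = 2 * degIn G s v := by
    rw [hor, Finset.card_union_of_disjoint hdisj, cardPP_filter1 G hv, cardPP_filter2 G hv]
    ring
  rw [hsub]
  omega

lemma PP_singleton (v : V) : (PP G {v}).card = 0 := by
  rw [Finset.card_eq_zero]
  ext p
  simp only [PP, Finset.mem_filter, Finset.mem_product, Finset.mem_singleton,
    Finset.notMem_empty, iff_false]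
  rintro ⟨⟨h1, h2⟩, hadj⟩
  rw [h1, h2] at hadj
  exact G.irrefl hadj

lemma reduce : ∀ (N : ℕ) (s : Finset V) (c : ℝ), 2 ≤ c → s.card ≤ N → s.Nonempty →
    c * (s.card : ℝ) ≤ ((PP G s).card : ℝ) →
    ∃ t : Finset V, t.Nonempty ∧ (∀ v ∈ t, 2 ≤ degIn G t v) ∧
      c * (t.card : ℝ) ≤ ((PP G t).card : ℝ) := by
  intro N
  induction N with
  | zero =>
    intro s c _ hN hne _
    exact absurd (Finset.card_pos.mpr hne) (by omega)
  | succ N ih =>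
    intro s c hc2 hN hne hinv
    by_cases hmin : ∀ v ∈ s, 2 ≤ degIn G s v
    · exact ⟨s, hne, hmin, hinv⟩
    · push_neg at hmin
      obtain ⟨v, hv, hdv⟩ := hmin
      have hcard1 : 1 ≤ s.card := Finset.card_pos.mpr hne
      -- s is not a singleton
      have hcard2 : 2 ≤ s.card := by
        by_contra hlt
        have h1 : s.card = 1 := by omega
        obtain ⟨w, hw⟩ := Finset.card_eq_one.mp h1
        subst hw
        rw [PP_singleton] at hinv
        simp only [Finset.card_singleton, Nat.cast_one, mul_one, Nat.cast_zero] at hinv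
        linarith
      have herase := PP_erase G hv
      have hinv' : c * (((s.erase v).card : ℝ)) ≤ ((PP G (s.erase v)).card : ℝ) := by
        rw [Finset.card_erase_of_mem hv]
        have hle : 2 * (degIn G s v : ℝ) ≤ c := by
          have h1 : degIn G s v ≤ 1 := by omega
          have : (degIn G s v : ℝ) ≤ 1 := by exact_mod_cast h1
          linarith
        have hPPe : ((PP G (s.erase v)).card : ℝ) =
            ((PP G s).card : ℝ) - 2 * (degIn G s v : ℝ) := by
          push_cast [← herase]
          ring
        rw [hPPe]
        push_cast [Nat.cast_sub hcard1]
        nlinarith [hinv]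
      have hne' : (s.erase v).Nonempty := by
        rw [← Finset.card_pos, Finset.card_erase_of_mem hv]
        omega
      exact ih (s.erase v) c hc2 (by rw [Finset.card_erase_of_mem hv]; omega) hne' hinv'

lemma sum_degIn (t : Finset V) : ∑ v ∈ t, degIn G t v = (PP G t).card := by
  have h := Finset.card_eq_sum_card_fiberwise (s := PP G t) (t := t) (f := fun p => p.1)
    (fun p hp => (Finset.mem_product.mp (Finset.mem_filter.mp hp).1).1)
  rw [h]
  exact Finset.sum_congr rfl (fun v hv => (cardPP_filter1 G hv).symm)

end Reduction


section Final

variable {V : Type*} [Fintype V] [DecidableEq V] (G : SimpleGraph V) [DecidableRel G.Adj]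

instance instDecComap (t : Finset V) :
    DecidableRel (G.comap (Function.Embedding.subtype fun x => x ∈ t)).Adj :=
  fun a b => inferInstanceAs (Decidable (G.Adj a b))

lemma deg_comap (t : Finset V) (w : ↥t) :
    (G.comap (Function.Embedding.subtype fun x => x ∈ t)).degree w = degIn G t w.val := by
  rw [← SimpleGraph.card_neighborFinset_eq_degree]
  unfold degIn
  apply Finset.card_bij (fun (u : ↥t) (_ : u ∈ _) => u.val)
  · intro u hu
    rw [SimpleGraph.mem_neighborFinset] at hu
    rw [Finset.mem_inter, SimpleGraph.mem_neighborFinset]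
    exact ⟨hu, u.2⟩
  · intro a ha b hb hab
    exact Subtype.ext hab
  · intro x hx
    rw [Finset.mem_inter, SimpleGraph.mem_neighborFinset] at hx
    refine ⟨⟨x, hx.2⟩, ?_, rfl⟩
    rw [SimpleGraph.mem_neighborFinset]
    exact hx.1

end Final

end MooreAux

open MooreAux in
/-- Irregular Moore bound (Alon–Hoory–Linial): an `n`-vertex graph with average degree
`d ≥ 2` and no cycle of length at most `2k` satisfies `d(d-1)^{k-1} ≤ n`. -/
theorem moore_bound_average_degree {V : Type*} [Fintype V] (G : SimpleGraph V)
    [DecidableRel G.Adj] (k : ℕ) (hk : 1 ≤ k) (n : ℕ) (hn : n = Fintype.card V) (d : ℝ)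
    (hd : d = 2 * G.edgeFinset.card / n) (hd2 : 2 ≤ d)
    (hcyc : ∀ (x : V) (c : G.Walk x x), c.IsCycle → ¬ c.length ≤ 2 * k) :
    d * (d - 1) ^ (k - 1) ≤ n := by
  classical
  have hn0 : 0 < n := by
    by_contra h
    have hzero : n = 0 := by omega
    have : d = 0 := by rw [hd, hzero]; norm_num
    rw [this] at hd2
    linarith
  have hnV : Nonempty V := by
    rw [hn] at hn0
    exact Fintype.card_pos_iff.mp hn0
  have hnR : (0:ℝ) < (n : ℝ) := by exact_mod_cast hn0
  have hdn : d * (n : ℝ) = 2 * (G.edgeFinset.card : ℝ) := by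
    rw [hd]
    field_simp
  have hPPuniv : (PP G Finset.univ).card = ∑ v, G.degree v := by
    rw [← sum_degIn G Finset.univ]
    refine Finset.sum_congr rfl (fun v _ => ?_)
    unfold degIn
    rw [Finset.inter_univ, SimpleGraph.card_neighborFinset_eq_degree]
  have hinv : d * ((Finset.univ : Finset V).card : ℝ) ≤ ((PP G Finset.univ).card : ℝ) := by
    rw [Finset.card_univ, ← hn, hPPuniv, SimpleGraph.sum_degrees_eq_twice_card_edges]
    rw [hdn]
    push_cast
    exact le_refl _
  obtain ⟨t, htne, htmin, htavg⟩ := reduce G (Fintype.card V) Finset.univ d hd2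
    (le_of_eq Finset.card_univ) Finset.univ_nonempty hinv
  haveI hWne : Nonempty ↥t := ⟨⟨htne.choose, htne.choose_spec⟩⟩
  have hd2' : ∀ w : ↥t,
      2 ≤ (G.comap (Function.Embedding.subtype fun x => x ∈ t)).degree w := fun w => by
    rw [deg_comap G t w]
    exact htmin w.val w.2
  have hsum : ∑ w : ↥t, ((G.comap (Function.Embedding.subtype fun x => x ∈ t)).degree w : ℝ) =
      ((PP G t).card : ℝ) := by
    rw [← sum_degIn G t]
    push_cast
    rw [← Finset.sum_coe_sort t (fun v => (degIn G t v : ℝ))]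
    refine Finset.sum_congr rfl (fun w _ => ?_)
    rw [deg_comap G t w]
  have havg' : d * (Fintype.card ↥t : ℝ) ≤
      ∑ w : ↥t, ((G.comap (Function.Embedding.subtype fun x => x ∈ t)).degree w : ℝ) := by
    rw [Fintype.card_coe, hsum]
    exact htavg
  have hcyc' : ∀ (x : ↥t)
      (w : (G.comap (Function.Embedding.subtype fun x => x ∈ t)).Walk x x),
      w.IsCycle → ¬ w.length ≤ 2 * k := by
    intro x w hw hlen
    have hinj : Function.Injective
        (⇑((SimpleGraph.Embedding.comap (Function.Embedding.subtype fun x => x ∈ t) G).toHom)) :=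
      Subtype.val_injective
    exact hcyc x.val
      (w.map (SimpleGraph.Embedding.comap (Function.Embedding.subtype fun x => x ∈ t) G).toHom)
      (hw.map hinj) ((SimpleGraph.Walk.length_map _ w).trans_le hlen)
  have hcore := core_bound (G.comap (Function.Embedding.subtype fun x => x ∈ t))
    hd2' k hk d hd2 havg' hcyc'
  have hle : (Fintype.card ↥t : ℝ) ≤ (n : ℝ) := by
    rw [Fintype.card_coe, hn]
    exact_mod_cast Finset.card_le_univ t
  exact hcore.trans hle
end

section
/- Let G be a graph with no even cycle of length at most 2k, and let T be a breadth-first search tree rooted at a vertex v. Then for each r ≤ k, no vertex at distance r from v is adjacent to two vertices at distance r−1 from v. -/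
open SimpleGraph

/-- Splitting a geodesic walk at a vertex on it gives two geodesic pieces. -/
lemma geo_split {V : Type*} [DecidableEq V] {G : SimpleGraph V} {a b z : V} (p : G.Walk a b)
    (hp : p.length = G.dist a b) (hz : z ∈ p.support) :
    (p.takeUntil z hz).length = G.dist a z ∧ (p.dropUntil z hz).length = G.dist z b := by
  classical
  have h1 : G.dist a z ≤ (p.takeUntil z hz).length := G.dist_le _
  have h2 : G.dist z b ≤ (p.dropUntil z hz).length := G.dist_le _
  have hsum : (p.takeUntil z hz).length + (p.dropUntil z hz).length = p.length := by
    rw [← Walk.length_append, p.take_spec hz]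
  obtain ⟨w1, hw1⟩ := (p.takeUntil z hz).reachable.exists_walk_length_eq_dist
  obtain ⟨w2, hw2⟩ := (p.dropUntil z hz).reachable.exists_walk_length_eq_dist
  have htri : G.dist a b ≤ G.dist a z + G.dist z b := by
    have := G.dist_le (w1.append w2)
    rwa [Walk.length_append, hw1, hw2] at this
  omega

/-- In a graph with no even cycle of length at most `2k`, no vertex at distance `r ≤ k`
from a root `v` is adjacent to two distinct vertices at distance `r - 1` from `v`. -/
theorem bfs_no_two_parents {V : Type*} (G : SimpleGraph V) (k : ℕ) (hk : 2 ≤ k)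
    (hcyc : ∀ (x : V) (c : G.Walk x x), c.IsCycle → Even c.length → ¬ c.length ≤ 2 * k)
    (v : V) (r : ℕ) (hr1 : 1 ≤ r) (hrk : r ≤ k)
    (x y₁ y₂ : V) (hx : G.dist v x = r)
    (hy₁ : G.dist v y₁ = r - 1) (hy₂ : G.dist v y₂ = r - 1)
    (ha₁ : G.Adj x y₁) (ha₂ : G.Adj x y₂) :
    y₁ = y₂ := by
  classical
  have hreachvx : G.Reachable v x := Reachable.of_dist_ne_zero (by omega)
  rcases Nat.lt_or_ge r 2 with hr2 | hr2
  · -- r = 1 : then y₁ = v = y₂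
    have hr : r = 1 := by omega
    have h1 : y₁ = v := by
      have : G.Reachable v y₁ := hreachvx.trans ha₁.reachable
      have := (this.dist_eq_zero_iff).mp (by omega)
      exact this.symm
    have h2 : y₂ = v := by
      have : G.Reachable v y₂ := hreachvx.trans ha₂.reachable
      have := (this.dist_eq_zero_iff).mp (by omega)
      exact this.symm
    rw [h1, h2]
  · by_contra hne
    have hry : G.dist v y₁ ≠ 0 := by omega
    obtain ⟨p₁, hp₁⟩ := (Reachable.of_dist_ne_zero hry).exists_walk_length_eq_dist
    have hry2 : G.dist v y₂ ≠ 0 := by omega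
    obtain ⟨p₂, hp₂⟩ := (Reachable.of_dist_ne_zero hry2).exists_walk_length_eq_dist
    set p : G.Walk x v := Walk.cons ha₁ p₁.reverse with hp_def
    set q : G.Walk x v := Walk.cons ha₂ p₂.reverse with hq_def
    have hdxv : G.dist x v = r := by rw [G.dist_comm]; exact hx
    have hplen : p.length = G.dist x v := by
      simp [hp_def, Walk.length_cons, Walk.length_reverse, hp₁, hy₁, hdxv]; omega
    have hqlen : q.length = G.dist x v := by
      simp [hq_def, Walk.length_cons, Walk.length_reverse, hp₂, hy₂, hdxv]; omega
    -- y₁ is not on q and y₂ is not on p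
    have key : ∀ (y : V) (pp : G.Walk v y), pp.length = G.dist v y → G.dist v y = r - 1 →
        ∀ w ∈ pp.support, G.dist v w + G.dist w y = r - 1 := by
      intro y pp hlen hdist w hw
      obtain ⟨h1, h2⟩ := geo_split pp (by rw [hlen]) hw
      have : (pp.takeUntil w hw).length + (pp.dropUntil w hw).length = pp.length := by
        rw [← Walk.length_append, pp.take_spec hw]
      omega
    have hy1q : y₁ ∉ q.support := by
      intro hmem
      rw [hq_def, Walk.support_cons] at hmem
      rcases List.mem_cons.mp hmem with h | h
      · exact ha₁.ne' h
      · rw [Walk.support_reverse, List.mem_reverse] at h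
        have := key y₂ p₂ (by rw [hp₂, hy₂]) hy₂ y₁ h
        have h0 : G.dist y₁ y₂ = 0 := by omega
        have hreach : G.Reachable y₁ y₂ := ((p₂.dropUntil y₁ h)).reachable
        exact hne (hreach.dist_eq_zero_iff.mp h0)
    have hy2p : y₂ ∉ p.support := by
      intro hmem
      rw [hp_def, Walk.support_cons] at hmem
      rcases List.mem_cons.mp hmem with h | h
      · exact ha₂.ne' h
      · rw [Walk.support_reverse, List.mem_reverse] at h
        have := key y₁ p₁ (by rw [hp₁, hy₁]) hy₁ y₂ h
        have h0 : G.dist y₂ y₁ = 0 := by omega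
        have hreach : G.Reachable y₂ y₁ := ((p₁.dropUntil y₂ h)).reachable
        exact hne (hreach.dist_eq_zero_iff.mp h0).symm
    -- the set of distances to common vertices (other than x)
    set S : Set ℕ := {n : ℕ | ∃ z, z ∈ p.support ∧ z ∈ q.support ∧ z ≠ x ∧ G.dist x z = n}
      with hS_def
    have hvx : v ≠ x := by
      intro h; rw [h] at hx; simp [G.dist_self] at hx; omega
    have hSne : S.Nonempty := ⟨r, v, p.end_mem_support, q.end_mem_support, hvx, hdxv⟩
    obtain ⟨z, hzp, hzq, hzx, hzd⟩ := Nat.sInf_mem hSne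
    set N : ℕ := sInf S with hN_def
    have hNr : N ≤ r := by
      have : r ∈ S := ⟨v, p.end_mem_support, q.end_mem_support, hvx, hdxv⟩
      exact Nat.sInf_le this
    set pz : G.Walk x z := p.takeUntil z hzp with hpz_def
    set qz : G.Walk x z := q.takeUntil z hzq with hqz_def
    have hpzlen : pz.length = G.dist x z := (geo_split p hplen hzp).1
    have hqzlen : qz.length = G.dist x z := (geo_split q hqlen hzq).1
    have hpzpath : pz.IsPath := pz.isPath_of_length_eq_dist hpzlen
    have hqzpath : qz.IsPath := qz.isPath_of_length_eq_dist hqzlen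
    -- N ≥ 2
    have hN1 : N ≠ 0 := by
      intro h0
      have : G.Reachable x z := pz.reachable
      exact hzx (this.dist_eq_zero_iff.mp (by omega)).symm
    have hN2 : 2 ≤ N := by
      rcases Nat.lt_or_ge N 2 with h | h
      · exfalso
        have hN1' : N = 1 := by omega
        -- then z = y₁, contradicting y₁ ∉ q.support
        have hz_eq : z = y₁ := by
          have h1 : p.getVert 1 = y₁ := by
            rw [hp_def]; exact (Walk.getVert_cons_succ (n := 0) _ _).trans (Walk.getVert_zero _)
          have h2 : p.getVert 1 = z := by
            conv_lhs => rw [← p.take_spec hzp]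
            rw [Walk.getVert_append]
            have : ¬ (1 < pz.length) := by rw [hpzlen, hzd]; omega
            rw [if_neg this]
            have : 1 - pz.length = 0 := by rw [hpzlen, hzd]; omega
            rw [this, Walk.getVert_zero]
          rw [← h1, h2]
        rw [hz_eq] at hzq
        exact hy1q hzq
      · exact h
    -- common vertices of pz and qz are only x and z
    have hinter : ∀ w, w ∈ pz.support → w ∈ qz.support → w = x ∨ w = z := by
      intro w hwp hwq
      by_cases hwx : w = x
      · left; exact hwx
      · right
        have hwP : w ∈ p.support := p.support_takeUntil_subset hzp hwp
        have hwQ : w ∈ q.support := q.support_takeUntil_subset hzq hwq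
        have hmemS : G.dist x w ∈ S := ⟨w, hwP, hwQ, hwx, rfl⟩
        have hNle : N ≤ G.dist x w := Nat.sInf_le hmemS
        obtain ⟨h1, h2⟩ := geo_split pz hpzlen hwp
        have hsum : (pz.takeUntil w hwp).length + (pz.dropUntil w hwp).length = pz.length := by
          rw [← Walk.length_append, pz.take_spec hwp]
        have hdwz : G.dist w z = 0 := by
          rw [hpzlen, hzd] at hsum; omega
        have : G.Reachable w z := (pz.dropUntil w hwp).reachable
        exact this.dist_eq_zero_iff.mp hdwz
    -- build the cycle
    set c : G.Walk x x := pz.append qz.reverse with hc_def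
    have hclen : c.length = 2 * N := by
      rw [hc_def, Walk.length_append, Walk.length_reverse, hpzlen, hqzlen, hzd]; omega
    have hAdjxz : ¬ G.Adj x z := by
      intro hadj
      have := (G.dist_eq_one_iff_adj).mpr hadj
      omega
    have hedge_disj : ∀ e, e ∈ pz.edges → e ∈ qz.reverse.edges → False := by
      intro e hep heq
      rw [Walk.edges_reverse, List.mem_reverse] at heq
      induction e with
      | h a b =>
        have hab : G.Adj a b := pz.edges_subset_edgeSet hep
        have hap : a ∈ pz.support := pz.fst_mem_support_of_mem_edges hep
        have hbp : b ∈ pz.support := pz.snd_mem_support_of_mem_edges hep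
        have haq : a ∈ qz.support := qz.fst_mem_support_of_mem_edges heq
        have hbq : b ∈ qz.support := qz.snd_mem_support_of_mem_edges heq
        rcases hinter a hap haq with ha | ha <;> rcases hinter b hbp hbq with hb | hb
        · exact hab.ne (ha.trans hb.symm)
        · exact hAdjxz (ha ▸ hb ▸ hab)
        · exact hAdjxz (ha ▸ hb ▸ hab).symm
        · exact hab.ne (ha.trans hb.symm)
    have hcycle : c.IsCycle := by
      rw [Walk.isCycle_def]
      refine ⟨⟨?_⟩, ?_, ?_⟩
      · -- edges nodup
        rw [hc_def, Walk.edges_append]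
        refine List.Nodup.append ?_ ?_ ?_
        · exact hpzpath.isTrail.edges_nodup
        · exact hqzpath.reverse.isTrail.edges_nodup
        · intro e hep heq
          exact hedge_disj e hep heq
      · -- c ≠ nil
        intro h
        have : c.length = 0 := by rw [h]; rfl
        omega
      · -- support tail nodup
        rw [hc_def, Walk.tail_support_append]
        refine List.Nodup.append ?_ ?_ ?_
        · exact hpzpath.support_nodup.tail
        · exact hqzpath.reverse.support_nodup.tail
        · intro w hwp hwq
          have hwx : w ≠ x := by
            intro h
            have := hpzpath.support_nodup
            rw [pz.support_eq_cons] at this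
            exact (List.nodup_cons.mp this).1 (h ▸ hwp)
          have hwzne : w ≠ z := by
            intro h
            have := hqzpath.reverse.support_nodup
            rw [qz.reverse.support_eq_cons] at this
            exact (List.nodup_cons.mp this).1 (h ▸ hwq)
          have hwp' : w ∈ pz.support := List.mem_of_mem_tail hwp
          have hwq' : w ∈ qz.support := by
            have : w ∈ qz.reverse.support := List.mem_of_mem_tail hwq
            rwa [Walk.support_reverse, List.mem_reverse] at this
          rcases hinter w hwp' hwq' with h | h
          · exact hwx h
          · exact hwzne h
    have heven : Even c.length := by rw [hclen]; exact even_two_mul N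
    have hle : c.length ≤ 2 * k := by rw [hclen]; omega
    exact hcyc x c hcycle heven hle
end

section
/- Let G be a d-regular n-vertex graph with no even cycle of length at most 2k. Then 1 + d + d(d−2) + d(d−2)² + ⋯ + d(d−2)^{k−1} ≤ n; in particular d < n^{1/k} + 2. -/
open SimpleGraph Finset

namespace MooreAux

variable {V : Type*}

lemma cap_lemma (G : SimpleGraph V) (r : V) :
    ∀ m : ℕ, ∀ u w : V, u ≠ w → G.Reachable u r → G.Reachable w r →
    G.dist u r = m → G.dist w r = m →
    ∀ t : G.Walk u w, t.IsPath → (∀ x ∈ t.support, m ≤ G.dist x r) → Even t.length →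
    ∃ (x : V) (c : G.Walk x x), c.IsCycle ∧ Even c.length ∧ c.length ≤ t.length + 2 * m := by
  intro m
  induction m with
  | zero =>
    intro u w hne hu hw hdu hdw t _ _ _
    exact absurd ((hu.dist_eq_zero_iff).mp hdu ▸ ((hw.dist_eq_zero_iff).mp hdw).symm) hne
  | succ m ih =>
    intro u w hne hu hw hdu hdw t ht hsup hev
    -- extract second vertex of a geodesic from u
    obtain ⟨p, hp⟩ := hu.exists_walk_length_eq_dist
    rw [hdu] at hp
    cases p with
    | nil => simp at hp
    | @cons _ u' _ hA q =>
      obtain ⟨pw, hpw⟩ := hw.exists_walk_length_eq_dist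
      rw [hdw] at hpw
      cases pw with
      | nil => simp at hpw
      | @cons _ w' _ hB qw =>
        simp only [Walk.length_cons, Nat.succ.injEq] at hp hpw
        have hu' : G.Reachable u' r := ⟨q⟩
        have hw' : G.Reachable w' r := ⟨qw⟩
        have hdu' : G.dist u' r = m := by
          have h1 : G.dist u' r ≤ m := hp ▸ SimpleGraph.dist_le q
          obtain ⟨q', hq'⟩ := hu'.exists_walk_length_eq_dist
          have h2 : m + 1 ≤ G.dist u' r + 1 := by
            have := SimpleGraph.dist_le (Walk.cons hA q')
            rw [Walk.length_cons, hq', hdu] at this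
            omega
          omega
        have hdw' : G.dist w' r = m := by
          have h1 : G.dist w' r ≤ m := hpw ▸ SimpleGraph.dist_le qw
          obtain ⟨q', hq'⟩ := hw'.exists_walk_length_eq_dist
          have h2 : m + 1 ≤ G.dist w' r + 1 := by
            have := SimpleGraph.dist_le (Walk.cons hB q')
            rw [Walk.length_cons, hq', hdw] at this
            omega
          omega
        have hu'nt : u' ∉ t.support := fun hx => by
          have := hsup u' hx; omega
        have hw'nt : w' ∉ t.support := fun hx => by
          have := hsup w' hx; omega
        by_cases hcase : u' = w'
        · -- close the cycle
          subst hcase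
          refine ⟨w, Walk.cons hB (Walk.cons hA.symm t), ?_, ?_, ?_⟩
          · rw [Walk.cons_isCycle_iff]
            constructor
            · exact ht.cons hu'nt
            · intro he
              rw [Walk.edges_cons, List.mem_cons] at he
              rcases he with he | he
              · rw [Sym2.eq_iff] at he
                rcases he with ⟨h1, h2⟩ | ⟨h1, h2⟩
                · exact hne (h2 ▸ h1 ▸ rfl)
                · exact hne h1.symm
              · exact hu'nt (Walk.snd_mem_support_of_mem_edges t he)
          · rw [Walk.length_cons, Walk.length_cons]
            exact hev.add even_two
          · rw [Walk.length_cons, Walk.length_cons]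
            omega
        · -- extend the cap
          have htc : (t.concat hB).IsPath := by
            rw [Walk.isPath_def, Walk.support_concat]
            have := ht.support_nodup
            simp [List.nodup_append, this, hw'nt]
            exact fun a ha h => hw'nt (h ▸ ha)
          have ht' : (Walk.cons hA.symm (t.concat hB)).IsPath := by
            refine htc.cons ?_
            rw [Walk.support_concat]
            simp [hu'nt, hcase]
          have hsup' : ∀ x ∈ (Walk.cons hA.symm (t.concat hB)).support, m ≤ G.dist x r := by
            intro x hx
            rw [Walk.support_cons, List.mem_cons] at hx
            rcases hx with rfl | hx
            · omega
            · rw [Walk.support_concat, List.mem_append] at hx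
              rcases hx with hx | hx
              · have := hsup x hx; omega
              · simp at hx; subst hx; omega
          have hev' : Even (Walk.cons hA.symm (t.concat hB)).length := by
            rw [Walk.length_cons, Walk.length_concat]
            exact hev.add even_two
          obtain ⟨x, c, hc, hce, hcl⟩ := ih u' w' hcase hu' hw' hdu' hdw' _ ht' hsup' hev'
          refine ⟨x, c, hc, hce, ?_⟩
          rw [Walk.length_cons, Walk.length_concat] at hcl
          omega

lemma adj_dist_le (G : SimpleGraph V) {a b r : V} (hab : G.Adj a b)
    (hbr : G.Reachable b r) : G.dist a r ≤ G.dist b r + 1 := by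
  obtain ⟨q, hq⟩ := hbr.exists_walk_length_eq_dist
  have := SimpleGraph.dist_le (Walk.cons hab q)
  rwa [Walk.length_cons, hq] at this

lemma no_two (G : SimpleGraph V) (r : V) (k : ℕ)
    (hcyc : ∀ (x : V) (c : G.Walk x x), c.IsCycle → Even c.length → ¬ c.length ≤ 2 * k)
    {v u w : V} {i : ℕ} (hik : i + 1 ≤ k)
    (huw : u ≠ w) (hvu : G.Adj v u) (hvw : G.Adj v w)
    (hu : G.Reachable u r) (hw : G.Reachable w r)
    (hdu : G.dist u r = i) (hdw : G.dist w r = i) (hdv : i ≤ G.dist v r) : False := by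
  set t : G.Walk u w := Walk.cons hvu.symm (Walk.cons hvw Walk.nil) with hT
  have ht : t.IsPath := by
    rw [hT, Walk.cons_isPath_iff, Walk.cons_isPath_iff]
    refine ⟨⟨Walk.IsPath.nil, by simp [hvw.ne]⟩, ?_⟩
    simp [hvu.ne', huw]
  have hsup : ∀ x ∈ t.support, i ≤ G.dist x r := by
    intro x hx
    rw [hT] at hx
    simp only [Walk.support_cons, Walk.support_nil, List.mem_cons,
      List.mem_singleton, List.not_mem_nil, or_false] at hx
    rcases hx with rfl | rfl | rfl
    · omega
    · exact hdv
    · omega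
  have hev : Even t.length := by rw [hT]; simp [Walk.length_cons]
  obtain ⟨x, c, hc, hce, hcl⟩ := cap_lemma G r i u w huw hu hw hdu hdw t ht hsup hev
  have hlen : t.length = 2 := by rw [hT]; simp [Walk.length_cons]
  exact hcyc x c hc hce (by omega)

end MooreAux

open MooreAux in
/-- A `d`-regular `n`-vertex graph with no even cycle of length at most `2k` satisfies
`1 + d + d(d−2) + ⋯ + d(d−2)^{k−1} ≤ n`, and in particular `d < n^{1/k} + 2`. -/
theorem regular_moore_type_bound {V : Type*} [Fintype V] [Nonempty V] (G : SimpleGraph V)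
    [DecidableRel G.Adj] (k : ℕ) (hk : 2 ≤ k) (n : ℕ) (hn : n = Fintype.card V)
    (d : ℕ) (hreg : G.IsRegularOfDegree d)
    (hcyc : ∀ (x : V) (c : G.Walk x x), c.IsCycle → Even c.length → ¬ c.length ≤ 2 * k) :
    1 + d * ∑ i ∈ Finset.range k, (d - 2) ^ i ≤ n ∧
      (d : ℝ) < (n : ℝ) ^ (1 / (k : ℝ)) + 2 := by
  classical
  obtain ⟨r⟩ : Nonempty V := inferInstance
  set S : ℕ → Finset V := fun i =>
    Finset.univ.filter (fun v => G.Reachable v r ∧ G.dist v r = i) with hS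
  have hmem : ∀ i v, v ∈ S i ↔ G.Reachable v r ∧ G.dist v r = i := by
    intro i v; simp [hS]
  have hS0 : S 0 = {r} := by
    ext v; rw [hmem, Finset.mem_singleton]
    constructor
    · rintro ⟨h1, h2⟩; exact h1.dist_eq_zero_iff.mp h2
    · rintro rfl; exact ⟨Reachable.refl _, SimpleGraph.dist_self⟩
  have hS1 : (S 1).card = d := by
    have heq : S 1 = G.neighborFinset r := by
      ext v; rw [hmem, mem_neighborFinset]
      constructor
      · rintro ⟨h1, h2⟩; exact (SimpleGraph.dist_eq_one_iff_adj.mp h2).symm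
      · intro h; exact ⟨h.symm.reachable, SimpleGraph.dist_eq_one_iff_adj.mpr h.symm⟩
    rw [heq, G.card_neighborFinset_eq_degree, hreg r]
  have growth : ∀ i, 1 ≤ i → i + 1 ≤ k → (d - 2) * (S i).card ≤ (S (i + 1)).card := by
    intro i hi1 hik
    set N : V → Finset V := fun v => G.neighborFinset v ∩ S (i + 1) with hN
    have key2 : ∀ v1 ∈ S i, ∀ v2 ∈ S i, v1 ≠ v2 → Disjoint (N v1) (N v2) := by
      intro v1 hv1 v2 hv2 hvne
      rw [Finset.disjoint_left]
      intro y hy1 hy2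
      simp only [hN, Finset.mem_inter, mem_neighborFinset] at hy1 hy2
      obtain ⟨ha1, hy⟩ := hy1
      obtain ⟨ha2, -⟩ := hy2
      rw [hmem] at hv1 hv2 hy
      exact no_two G r k hcyc hik hvne ha1.symm ha2.symm hv1.1 hv2.1 hv1.2 hv2.2
        (by rw [hy.2]; omega)
    have key1 : ∀ v ∈ S i, d - 2 ≤ (N v).card := by
      intro v hv
      rw [hmem] at hv
      obtain ⟨hvr, hvd⟩ := hv
      have hsub : G.neighborFinset v ⊆
          (G.neighborFinset v ∩ S (i - 1)) ∪ (G.neighborFinset v ∩ S i) ∪ N v := by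
        intro y hy
        have hadj : G.Adj v y := (mem_neighborFinset _ _ _).mp hy
        have hyr : G.Reachable y r := hadj.symm.reachable.trans hvr
        have h1 : G.dist y r ≤ i + 1 := by
          have := adj_dist_le G hadj.symm hvr; omega
        have h2 : i ≤ G.dist y r + 1 := by
          have := adj_dist_le G hadj hyr; omega
        have h3 : G.dist y r = i - 1 ∨ G.dist y r = i ∨ G.dist y r = i + 1 := by omega
        simp only [hN, Finset.mem_union, Finset.mem_inter, hmem]
        rcases h3 with h3 | h3 | h3
        · exact Or.inl (Or.inl ⟨hy, hyr, h3⟩)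
        · exact Or.inl (Or.inr ⟨hy, hyr, h3⟩)
        · exact Or.inr ⟨hy, hyr, h3⟩
      have c1 : (G.neighborFinset v ∩ S (i - 1)).card ≤ 1 := by
        rw [Finset.card_le_one]
        intro a ha b hb
        by_contra hab
        simp only [Finset.mem_inter, mem_neighborFinset, hmem] at ha hb
        exact no_two G r k hcyc (show (i - 1) + 1 ≤ k by omega) hab ha.1 hb.1
          ha.2.1 hb.2.1 ha.2.2 hb.2.2 (by rw [hvd]; omega)
      have c2 : (G.neighborFinset v ∩ S i).card ≤ 1 := by
        rw [Finset.card_le_one]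
        intro a ha b hb
        by_contra hab
        simp only [Finset.mem_inter, mem_neighborFinset, hmem] at ha hb
        exact no_two G r k hcyc hik hab ha.1 hb.1
          ha.2.1 hb.2.1 ha.2.2 hb.2.2 (by rw [hvd])
      have hd : d ≤ 1 + 1 + (N v).card := by
        calc d = (G.neighborFinset v).card := by
              rw [G.card_neighborFinset_eq_degree, hreg v]
          _ ≤ ((G.neighborFinset v ∩ S (i - 1)) ∪ (G.neighborFinset v ∩ S i) ∪ N v).card :=
              Finset.card_le_card hsub
          _ ≤ ((G.neighborFinset v ∩ S (i - 1)) ∪ (G.neighborFinset v ∩ S i)).card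
              + (N v).card := Finset.card_union_le _ _
          _ ≤ (G.neighborFinset v ∩ S (i - 1)).card + (G.neighborFinset v ∩ S i).card
              + (N v).card := by
                have := Finset.card_union_le (G.neighborFinset v ∩ S (i - 1))
                  (G.neighborFinset v ∩ S i)
                omega
          _ ≤ 1 + 1 + (N v).card := by omega
      omega
    calc (d - 2) * (S i).card = ∑ _v ∈ S i, (d - 2) := by
          rw [Finset.sum_const, smul_eq_mul, mul_comm]
      _ ≤ ∑ v ∈ S i, (N v).card := Finset.sum_le_sum key1
      _ = ((S i).biUnion N).card := (Finset.card_biUnion key2).symm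
      _ ≤ (S (i + 1)).card := by
          refine Finset.card_le_card ?_
          intro y hy
          rw [Finset.mem_biUnion] at hy
          obtain ⟨v, -, hyv⟩ := hy
          exact (Finset.mem_inter.mp hyv).2
  have lower : ∀ j, j + 1 ≤ k → d * (d - 2) ^ j ≤ (S (j + 1)).card := by
    intro j
    induction j with
    | zero => intro _; simpa using hS1.ge
    | succ j ihj =>
      intro hjk
      calc d * (d - 2) ^ (j + 1) = (d - 2) * (d * (d - 2) ^ j) := by ring
        _ ≤ (d - 2) * (S (j + 1)).card := Nat.mul_le_mul_left _ (ihj (by omega))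
        _ ≤ (S (j + 1 + 1)).card := growth (j + 1) (by omega) (by omega)
  have hdisj : ∀ i1 ∈ Finset.range (k + 1), ∀ i2 ∈ Finset.range (k + 1),
      i1 ≠ i2 → Disjoint (S i1) (S i2) := by
    intro i1 _ i2 _ hne
    rw [Finset.disjoint_left]
    intro v h1 h2
    rw [hmem] at h1 h2
    exact hne (by omega)
  have total : ∑ i ∈ Finset.range (k + 1), (S i).card ≤ n := by
    rw [← Finset.card_biUnion hdisj, hn]
    exact Finset.card_le_univ _
  have main1 : 1 + d * ∑ i ∈ Finset.range k, (d - 2) ^ i ≤ n := by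
    have hsplit : ∑ i ∈ Finset.range (k + 1), (S i).card
        = (∑ i ∈ Finset.range k, (S (i + 1)).card) + (S 0).card :=
      Finset.sum_range_succ' _ k
    have hsum : ∑ i ∈ Finset.range k, d * (d - 2) ^ i
        ≤ ∑ i ∈ Finset.range k, (S (i + 1)).card :=
      Finset.sum_le_sum (fun i hi => lower i (by
        have := Finset.mem_range.mp hi; omega))
    rw [Finset.mul_sum]
    have h0 : (S 0).card = 1 := by rw [hS0, Finset.card_singleton]
    omega
  refine ⟨main1, ?_⟩
  have hn1 : 1 ≤ n := by rw [hn]; exact Fintype.card_pos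
  have hkey : (d - 2) ^ k < n := by
    have h1 : (d - 2) ^ (k - 1) ≤ ∑ i ∈ Finset.range k, (d - 2) ^ i :=
      Finset.single_le_sum (f := fun i => (d - 2) ^ i) (fun i _ => Nat.zero_le _)
        (Finset.mem_range.mpr (by omega))
    have hk1 : k - 1 + 1 = k := by omega
    have h2 : (d - 2) ^ k ≤ d * (d - 2) ^ (k - 1) := by
      calc (d - 2) ^ k = (d - 2) * (d - 2) ^ (k - 1) := by
            conv_lhs => rw [← hk1]
            rw [pow_succ']
        _ ≤ d * (d - 2) ^ (k - 1) := Nat.mul_le_mul_right _ (by omega)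
    have h3 : d * (d - 2) ^ (k - 1) ≤ d * ∑ i ∈ Finset.range k, (d - 2) ^ i :=
      Nat.mul_le_mul_left _ h1
    omega
  have hnpos : (0 : ℝ) < n := by exact_mod_cast hn1
  have hrpow_pos : 0 < (n : ℝ) ^ (1 / (k : ℝ)) := Real.rpow_pos_of_pos hnpos _
  have hkR : (k : ℝ) ≠ 0 := by
    have : 0 < k := by omega
    exact_mod_cast this.ne'
  have hdm2 : ((d - 2 : ℕ) : ℝ) < (n : ℝ) ^ (1 / (k : ℝ)) := by
    by_contra hle
    push_neg at hle
    have h3 : (n : ℝ) = ((n : ℝ) ^ (1 / (k : ℝ))) ^ (k : ℕ) := by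
      rw [← Real.rpow_natCast ((n : ℝ) ^ (1 / (k : ℝ))) k, ← Real.rpow_mul hnpos.le,
        one_div, inv_mul_cancel₀ hkR, Real.rpow_one]
    have h4 : (n : ℝ) ≤ ((d - 2 : ℕ) : ℝ) ^ (k : ℕ) := by
      rw [h3]
      exact pow_le_pow_left₀ (Real.rpow_nonneg hnpos.le _) hle k
    have h5 : ((d - 2 : ℕ) : ℝ) ^ (k : ℕ) < (n : ℝ) := by
      exact_mod_cast hkey
    linarith
  by_cases hd2 : d ≤ 2
  · have : (d : ℝ) ≤ 2 := by exact_mod_cast hd2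
    linarith
  · push_neg at hd2
    have hcast : ((d - 2 : ℕ) : ℝ) = (d : ℝ) - 2 := by
      have : 2 ≤ d := by omega
      push_cast [this]
      ring
    rw [hcast] at hdm2
    linarith
end

section
/- Let G be a graph with no even cycle of length at most 2k, and suppose two distinct paths of length exactly k join vertices u and v. Then the distance between u and v in G is strictly less than k. -/
open SimpleGraph Walk

section Aux
variable {V : Type*} {G : SimpleGraph V} [DecidableEq V]

private lemma takeUntil_start' {a v : V} (p : G.Walk a v) (h : a ∈ p.support) :
    p.takeUntil a h = Walk.nil := by
  cases p with
  | nil => rfl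
  | cons r q => simp [Walk.takeUntil]

private lemma takeUntil_cons'' {a b v w : V} (r : G.Adj a b) (p : G.Walk b v)
    (hw : w ∈ (Walk.cons r p).support) (hne : a ≠ w) (hw' : w ∈ p.support) :
    (Walk.cons r p).takeUntil w hw = Walk.cons r (p.takeUntil w hw') := by
  simp [Walk.takeUntil, hne]

private lemma exists_first' (S : Set V) : ∀ {a v : V} (P : G.Walk a v), v ∈ S →
    ∃ w, ∃ hw : w ∈ P.support, w ∈ S ∧
      ∀ x ∈ (P.takeUntil w hw).support, x ∈ S → x = w := by
  intro a v P
  induction P with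
  | nil =>
    intro hv
    refine ⟨_, Walk.start_mem_support _, hv, ?_⟩
    rw [takeUntil_start']
    simp
  | @cons x y z r p ih =>
    intro hv
    by_cases hx : x ∈ S
    · refine ⟨x, Walk.start_mem_support _, hx, ?_⟩
      rw [takeUntil_start']
      simp
    · obtain ⟨w, hw, hwS, hprop⟩ := ih hv
      have hne : x ≠ w := fun h => hx (h ▸ hwS)
      refine ⟨w, (by have h : w ∈ (Walk.cons r p).support := by simp [hw]
                     exact h), hwS, ?_⟩
      rw [takeUntil_cons'' r p _ hne hw]
      intro t ht htS
      rw [Walk.support_cons, List.mem_cons] at ht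
      rcases ht with rfl | ht
      · exact absurd htS hx
      · exact hprop t ht htS

private lemma length_takeUntil_eq_dist' {u v w : V} (P : G.Walk u v)
    (hP : P.length = G.dist u v) (hw : w ∈ P.support) :
    (P.takeUntil w hw).length = G.dist u w := by
  have h1 : G.dist u w ≤ (P.takeUntil w hw).length := SimpleGraph.dist_le _
  obtain ⟨W, hW⟩ := SimpleGraph.Reachable.exists_walk_length_eq_dist ⟨P.takeUntil w hw⟩
  have h2 := SimpleGraph.dist_le (W.append (P.dropUntil w hw))
  have h3 := congrArg Walk.length (P.take_spec hw)
  rw [Walk.length_append] at h2 h3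
  omega

private lemma isCycle_append_paths' {u w : V} (hne : u ≠ w) {P₁ Q₁ : G.Walk u w}
    (hP : P₁.IsPath) (hQ : Q₁.IsPath)
    (hdisj : ∀ x, x ∈ P₁.support → x ∈ Q₁.support → x = u ∨ x = w)
    (hE : ∀ e, e ∈ P₁.edges → e ∉ Q₁.edges) :
    (P₁.append Q₁.reverse).IsCycle := by
  rw [Walk.isCycle_def]
  refine ⟨⟨?_⟩, ?_, ?_⟩
  · rw [Walk.edges_append, Walk.edges_reverse]
    refine List.Nodup.append hP.isTrail.edges_nodup (List.nodup_reverse.mpr hQ.isTrail.edges_nodup) ?_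
    intro e he he'
    exact hE e he (List.mem_reverse.mp he')
  · intro h
    have h0 : (P₁.append Q₁.reverse).length = 0 := by rw [h]; rfl
    rw [Walk.length_append] at h0
    have h0' : P₁.length = 0 := by omega
    exact hne (Walk.eq_of_length_eq_zero h0')
  · rw [Walk.tail_support_append]
    have hPn := hP.support_nodup
    have hQn := hQ.reverse.support_nodup
    rw [Walk.support_eq_cons] at hPn
    rw [Walk.support_eq_cons] at hQn
    refine List.Nodup.append (List.nodup_cons.mp hPn).2 (List.nodup_cons.mp hQn).2 ?_
    intro x hx hx'
    have hxu : x ≠ u := fun h => (List.nodup_cons.mp hPn).1 (h ▸ hx)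
    have hxw : x ≠ w := fun h => (List.nodup_cons.mp hQn).1 (h ▸ hx')
    have hxP : x ∈ P₁.support := by
      rw [Walk.support_eq_cons]; exact List.mem_cons_of_mem _ hx
    have hxQ : x ∈ Q₁.support := by
      have : x ∈ Q₁.reverse.support := by
        rw [Walk.support_eq_cons]; exact List.mem_cons_of_mem _ hx'
      rwa [Walk.support_reverse, List.mem_reverse] at this
    rcases hdisj x hxP hxQ with h | h
    · exact hxu h
    · exact hxw h

end Aux

private lemma unique_shortest' {V : Type*} (G : SimpleGraph V) (k : ℕ)
    (hcyc : ∀ (x : V) (c : G.Walk x x), c.IsCycle → Even c.length → ¬ c.length ≤ 2 * k) :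
    ∀ n, n ≤ k → ∀ u v (P Q : G.Walk u v), P.IsPath → Q.IsPath →
      P.length = n → Q.length = n → G.dist u v = n → P = Q := by
  classical
  intro n
  induction n with
  | zero =>
    intro _ u v P Q _ _ hP0 hQ0 _
    cases P with
    | nil =>
      cases Q with
      | nil => rfl
      | cons _ _ => simp at hQ0
    | cons _ _ => simp at hP0
  | succ m ih =>
    intro hnk u v P Q hP hQ hPl hQl hd
    cases P with
    | nil => simp at hPl
    | @cons _ a _ rpa P' =>
      cases Q with
      | nil => simp at hQl
      | @cons _ b _ rqb Q' =>
        rw [Walk.length_cons] at hPl hQl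
        by_cases hab : a = b
        · subst hab
          have h1 := G.dist_le P'
          obtain ⟨W, hW⟩ := SimpleGraph.Reachable.exists_walk_length_eq_dist
            (⟨P'⟩ : G.Reachable a v)
          have h2 := G.dist_le (Walk.cons rpa W)
          rw [Walk.length_cons, hW] at h2
          have hdm : G.dist a v = m := by omega
          have hPQ := ih (by omega) a v P' Q' hP.of_cons hQ.of_cons
            (by omega) (by omega) hdm
          rw [hPQ]
        · exfalso
          have hvQ : v ∈ (Walk.cons rqb Q').support := Walk.end_mem_support _
          obtain ⟨w, hw, hwS, hfirst⟩ :=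
            exists_first' {x | x ∈ (Walk.cons rqb Q').support} P' hvQ
          have hwu : w ≠ u := by
            intro h
            exact ((Walk.cons_isPath_iff _ _).mp hP).2 (h ▸ hw)
          have hwP : w ∈ (Walk.cons rpa P').support := by simp [hw]
          have hwQ : w ∈ (Walk.cons rqb Q').support := hwS
          have hwQ' : w ∈ Q'.support := by
            rcases (List.mem_cons.mp (by simpa using hwQ)) with h | h
            · exact absurd h hwu
            · exact h
          set P₁ := (Walk.cons rpa P').takeUntil w hwP with hP₁def
          set Q₁ := (Walk.cons rqb Q').takeUntil w hwQ with hQ₁def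
          have hP₁eq : P₁ = Walk.cons rpa (P'.takeUntil w hw) :=
            takeUntil_cons'' rpa P' hwP (fun h => hwu h.symm) hw
          have hQ₁eq : Q₁ = Walk.cons rqb (Q'.takeUntil w hwQ') :=
            takeUntil_cons'' rqb Q' hwQ (fun h => hwu h.symm) hwQ'
          have hP₁path : P₁.IsPath := hP.takeUntil _
          have hQ₁path : Q₁.IsPath := hQ.takeUntil _
          have hlP₁ : P₁.length = G.dist u w :=
            length_takeUntil_eq_dist' _ (by rw [Walk.length_cons]; omega) hwP
          have hlQ₁ : Q₁.length = G.dist u w :=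
            length_takeUntil_eq_dist' _ (by rw [Walk.length_cons]; omega) hwQ
          have hd0 : G.dist u w ≠ 0 := by
            intro h
            exact hwu ((SimpleGraph.Reachable.dist_eq_zero_iff ⟨P₁⟩).mp h).symm
          have hd1 : G.dist u w ≠ 1 := by
            intro h
            have haw : a = w := by
              have : (P'.takeUntil w hw).length = 0 := by
                have := congrArg Walk.length hP₁eq
                rw [Walk.length_cons, hlP₁, h] at this
                omega
              exact Walk.eq_of_length_eq_zero this
            have hbw : b = w := by
              have : (Q'.takeUntil w hwQ').length = 0 := by
                have := congrArg Walk.length hQ₁eq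
                rw [Walk.length_cons, hlQ₁, h] at this
                omega
              exact Walk.eq_of_length_eq_zero this
            exact hab (haw.trans hbw.symm)
          have hdisj : ∀ x, x ∈ P₁.support → x ∈ Q₁.support → x = u ∨ x = w := by
            intro x hxP hxQ
            rw [hP₁eq, Walk.support_cons, List.mem_cons] at hxP
            rcases hxP with rfl | hxP
            · exact Or.inl rfl
            · right
              refine hfirst x hxP ?_
              exact Walk.support_takeUntil_subset _ hwQ hxQ
          have hE : ∀ e, e ∈ P₁.edges → e ∉ Q₁.edges := by
            intro e heP heQ
            induction e using Sym2.ind with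
            | _ x y =>
              have hadjxy := Walk.adj_of_mem_edges _ heP
              have hx := hdisj x (Walk.fst_mem_support_of_mem_edges _ heP)
                (Walk.fst_mem_support_of_mem_edges _ heQ)
              have hy := hdisj y (Walk.snd_mem_support_of_mem_edges _ heP)
                (Walk.snd_mem_support_of_mem_edges _ heQ)
              have hadj : G.Adj u w := by
                rcases hx with rfl | rfl <;> rcases hy with rfl | rfl
                · exact absurd rfl hadjxy.ne
                · exact hadjxy
                · exact hadjxy.symm
                · exact absurd rfl hadjxy.ne
              exact hd1 (SimpleGraph.dist_eq_one_iff_adj.mpr hadj)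
          have hcycC : (P₁.append Q₁.reverse).IsCycle :=
            isCycle_append_paths' hwu.symm hP₁path hQ₁path hdisj hE
          have hlen : (P₁.append Q₁.reverse).length = 2 * G.dist u w := by
            rw [Walk.length_append, Walk.length_reverse, hlP₁, hlQ₁]
            ring
          refine hcyc u _ hcycC (by rw [hlen]; exact even_two_mul _) ?_
          rw [hlen]
          have : G.dist u w ≤ P₁.length := le_of_eq hlP₁.symm
          have hle := Walk.length_takeUntil_le (Walk.cons rpa P') hwP
          rw [← hP₁def, Walk.length_cons] at hle
          omega

/-- In a graph with no even cycle of length at most `2k`, if two distinct paths of length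
exactly `k` join `u` and `v`, then the distance between `u` and `v` is less than `k`. -/
theorem dist_lt_of_two_k_paths {V : Type*} (G : SimpleGraph V) (k : ℕ) (hk : 2 ≤ k)
    (hcyc : ∀ (x : V) (c : G.Walk x x), c.IsCycle → Even c.length → ¬ c.length ≤ 2 * k)
    (u v : V) (huv : u ≠ v) (P Q : G.Walk u v) (hP : P.IsPath) (hQ : Q.IsPath)
    (hPk : P.length = k) (hQk : Q.length = k) (hne : P ≠ Q) :
    G.dist u v < k := by
  by_contra hlt
  push_neg at hlt
  have h1 : G.dist u v ≤ k := hPk ▸ G.dist_le P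
  exact hne (unique_shortest' G k hcyc k le_rfl u v P Q hP hQ hPk hQk
    (le_antisymm h1 hlt))
end
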